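/- arXiv:2109.13700 — 7 statements merged into one kernel-verified Lean document; each statement's English description precedes it below -/
import Mathlib

section
/- For a nonzero real λ and u ≠ 1, the degenerate Frobenius-Euler numbers satisfy h_{n,λ}(1|u) − u·h_{n,λ}(u) = (1−u)·δ_{n,0} for all n ≥ 0, where δ_{n,0} is the Kronecker delta and h_{n,λ}(u) = h_{n,λ}(0|u). -/
open Finset PowerSeries

/-- The degenerate exponential `e_λ^x(t) = (1+λt)^{x/λ} = ∑_n (x)_{n,λ} t^n/n!`,
given via its power series coefficients. -/
noncomputable def degExp (lam : ℝ) (x : ℂ) : PowerSeries ℂ :=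
  PowerSeries.mk fun n => (∏ i ∈ Finset.range n, (x - (i : ℂ) * (lam : ℂ))) * (n.factorial : ℂ)⁻¹

theorem deg_frobenius_euler_numbers (lam : ℝ) (hlam : lam ≠ 0) (u : ℂ) (hu : u ≠ 1)
    (h : ℕ → ℂ → ℂ)
    (hh : ∀ x : ℂ,
      (PowerSeries.mk fun n => h n x * (n.factorial : ℂ)⁻¹)
          * (degExp lam 1 - PowerSeries.C u)
        = (1 - u) • degExp lam x) :
    ∀ n : ℕ, h n 1 - u * h n 0 = (1 - u) * (if n = 0 then 1 else 0) := by
  intro n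
  have hdeg0 : degExp lam 0 = 1 := by
    ext m
    cases m with
    | zero => simp [degExp]
    | succ k =>
        simp only [degExp, PowerSeries.coeff_mk, PowerSeries.coeff_one]
        have : (∏ i ∈ Finset.range (k + 1), ((0 : ℂ) - (i : ℂ) * (lam : ℂ))) = 0 := by
          apply Finset.prod_eq_zero (Finset.mem_range.mpr (Nat.succ_pos k))
          simp
        simp only [zero_sub] at this
        simp [this]
  have hne : degExp lam 1 - PowerSeries.C u ≠ 0 := by
    intro hz
    have h0 := congrArg (PowerSeries.constantCoeff) hz
    simp [degExp, ← PowerSeries.coeff_zero_eq_constantCoeff, sub_eq_zero] at h0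
    exact hu h0.symm
  have key :
      (PowerSeries.mk fun m => h m 1 * (m.factorial : ℂ)⁻¹)
        - PowerSeries.C u * (PowerSeries.mk fun m => h m 0 * (m.factorial : ℂ)⁻¹)
        = PowerSeries.C (1 - u) := by
    apply mul_right_cancel₀ hne
    rw [sub_mul, hh 1, mul_assoc, hh 0, hdeg0]
    simp [PowerSeries.smul_eq_C_mul]
    ring
  have hc := congrArg (PowerSeries.coeff n) key
  simp [PowerSeries.coeff_C] at hc
  have hfac : (n.factorial : ℂ) ≠ 0 := Nat.cast_ne_zero.mpr n.factorial_ne_zero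
  by_cases hn : n = 0
  · subst hn
    simpa [mul_assoc] using hc
  · simp only [if_neg hn] at hc
    field_simp at hc
    simp [hn, hc]
end

section
/- Let λ ≠ 0, u ≠ 1, and let p(x) be a polynomial of degree n with complex coefficients. If p(x) = ∑_{k=0}^{n} a_k h_{k,λ}(x|u), then for each k, a_k = (1/((1−u) k! λ^k)) ∑_{j=0}^{k} C(k,j) (−1)^{k−j} (p(1 + jλ) − u·p(jλ)). -/
open Finset PowerSeries Polynomial

noncomputable def dfeFF (lam : ℝ) (k : ℕ) (x : ℂ) : ℂ :=
  ∏ i ∈ Finset.range k, (x - (i : ℂ) * (lam : ℂ))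

lemma dfeFF_succ (lam : ℝ) (k : ℕ) (x : ℂ) :
    dfeFF lam (k + 1) x = dfeFF lam k x * (x - (k : ℂ) * (lam : ℂ)) :=
  Finset.prod_range_succ _ _

lemma dfeFF_add (lam : ℝ) (x y : ℂ) :
    ∀ n, dfeFF lam n (x + y)
      = ∑ j ∈ Finset.range (n + 1), (n.choose j : ℂ) * dfeFF lam j x * dfeFF lam (n - j) y := by
  intro n
  induction n with
  | zero => simp [dfeFF]
  | succ n ih =>
    rw [dfeFF_succ, ih, Finset.sum_mul]
    have key : ∀ j ∈ Finset.range (n + 1),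
        (n.choose j : ℂ) * dfeFF lam j x * dfeFF lam (n - j) y * (x + y - (n : ℂ) * (lam : ℂ))
        = (n.choose j : ℂ) * (dfeFF lam (j + 1) x * dfeFF lam (n - j) y)
          + (n.choose j : ℂ) * (dfeFF lam j x * dfeFF lam ((n - j) + 1) y) := by
      intro j hj
      have hj' : j ≤ n := Finset.mem_range_succ_iff.mp hj
      have hcast : ((n - j : ℕ) : ℂ) = (n : ℂ) - (j : ℂ) := by
        push_cast [hj']; ring
      rw [dfeFF_succ, dfeFF_succ, hcast]
      have hn : (n : ℂ) = (j : ℂ) + ((n : ℂ) - (j : ℂ)) := by ring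
      ring
    rw [Finset.sum_congr rfl key, Finset.sum_add_distrib]
    have h2 : ∑ j ∈ Finset.range (n + 1),
        (n.choose j : ℂ) * (dfeFF lam j x * dfeFF lam ((n - j) + 1) y)
        = ∑ j ∈ Finset.range (n + 2),
            (n.choose j : ℂ) * (dfeFF lam j x * dfeFF lam ((n + 1) - j) y) := by
      rw [Finset.sum_range_succ (fun j => (n.choose j : ℂ) * (dfeFF lam j x * dfeFF lam ((n + 1) - j) y)) (n+1)]
      rw [Nat.choose_succ_self]
      push_cast
      rw [zero_mul, add_zero]
      refine Finset.sum_congr rfl ?_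
      intro j hj
      have hj' : j ≤ n := Finset.mem_range_succ_iff.mp hj
      congr 3
      omega
    rw [h2, Finset.sum_range_succ' (fun j => (n.choose j : ℂ) * (dfeFF lam j x * dfeFF lam ((n + 1) - j) y)) (n+1)]
    rw [Finset.sum_range_succ' (fun j => ((n+1).choose j : ℂ) * dfeFF lam j x * dfeFF lam ((n + 1) - j) y) (n+1)]
    simp only [Nat.choose_zero_right, Nat.cast_one, Nat.succ_sub_succ_eq_sub, Nat.sub_zero]
    simp only [Nat.choose_succ_succ, Nat.cast_add, add_mul, mul_assoc]
    rw [Finset.sum_add_distrib]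
    ring

lemma degExp_coeff (lam : ℝ) (x : ℂ) (n : ℕ) :
    PowerSeries.coeff n (degExp lam x) = dfeFF lam n x * (n.factorial : ℂ)⁻¹ :=
  PowerSeries.coeff_mk _ _

lemma degExp_add_one (lam : ℝ) (x : ℂ) :
    degExp lam (x + 1) = degExp lam x * degExp lam 1 := by
  ext n
  rw [PowerSeries.coeff_mul, Finset.Nat.sum_antidiagonal_eq_sum_range_succ_mk,
    degExp_coeff, dfeFF_add, Finset.sum_mul]
  refine Finset.sum_congr rfl ?_
  intro j hj
  have hj' : j ≤ n := Finset.mem_range_succ_iff.mp hj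
  rw [degExp_coeff, degExp_coeff]
  have hfac : (n.choose j : ℂ) * (n.factorial : ℂ)⁻¹
      = (j.factorial : ℂ)⁻¹ * ((n - j).factorial : ℂ)⁻¹ := by
    have h1 : (n.choose j : ℂ) * (j.factorial : ℂ) * ((n - j).factorial : ℂ) = (n.factorial : ℂ) := by
      exact_mod_cast congrArg (Nat.cast : ℕ → ℂ) (Nat.choose_mul_factorial_mul_factorial hj')
    have hc0 : (n.choose j : ℂ) ≠ 0 := Nat.cast_ne_zero.mpr (Nat.choose_pos hj').ne'
    rw [← h1]
    field_simp
  calc (n.choose j : ℂ) * dfeFF lam j x * dfeFF lam (n - j) 1 * (n.factorial : ℂ)⁻¹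
      = dfeFF lam j x * dfeFF lam (n - j) 1 * ((n.choose j : ℂ) * (n.factorial : ℂ)⁻¹) := by ring
    _ = _ := by rw [hfac]; ring

lemma dfeFF_nat_mul (lam : ℝ) (k j : ℕ) :
    dfeFF lam k ((j : ℂ) * (lam : ℂ)) = (lam : ℂ) ^ k * (j.descFactorial k : ℂ) := by
  have hdp : ∀ (m : ℕ) (z : ℂ), (∏ i ∈ Finset.range m, (z - (i : ℂ)))
      = (descPochhammer ℂ m).eval z := by
    intro m z
    induction m with
    | zero => simp
    | succ m ihm => rw [Finset.prod_range_succ, ihm, descPochhammer_succ_right]; simp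
  have h0 : dfeFF lam k ((j : ℂ) * (lam : ℂ))
      = ∏ i ∈ Finset.range k, ((lam : ℂ) * ((j : ℂ) - (i : ℂ))) :=
    Finset.prod_congr rfl fun i _ => by ring
  rw [h0, Finset.prod_mul_distrib, Finset.prod_const, Finset.card_range, hdp,
    descPochhammer_eval_eq_descFactorial]

lemma dfe_alt_sum (k i : ℕ) :
    ∑ j ∈ Finset.range (k + 1), (k.choose j : ℂ) * (-1) ^ (k - j) * (j.descFactorial i : ℂ)
      = if i = k then (k.factorial : ℂ) else 0 := by
  have hcc : ∑ j ∈ Finset.range (k + 1), (k.choose j : ℂ) * (-1) ^ (k - j) * (j.choose i : ℂ)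
      = if i = k then 1 else 0 := by
    by_cases hik : i ≤ k
    · have hsub : Finset.Ico i (k + 1) ⊆ Finset.range (k + 1) := by
        intro z hz; simp only [Finset.mem_Ico] at hz; exact Finset.mem_range.mpr hz.2
      rw [← Finset.sum_subset hsub (by
        intro z hz hz2
        simp only [Finset.mem_range] at hz
        simp only [Finset.mem_Ico, not_and, not_le] at hz2
        have : z < i := by omega
        rw [Nat.choose_eq_zero_of_lt this]; simp)]
      rw [Finset.sum_Ico_eq_sum_range]
      have hkk : k + 1 - i = (k - i) + 1 := by omega
      rw [hkk]
      have hterm : ∀ m ∈ Finset.range ((k - i) + 1),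
          (k.choose (i + m) : ℂ) * (-1) ^ (k - (i + m)) * ((i + m).choose i : ℂ)
          = (k.choose i : ℂ) * (((k - i).choose m : ℂ) * (-1) ^ ((k - i) - m)) := by
        intro m hm
        have hm' : m ≤ k - i := Finset.mem_range_succ_iff.mp hm
        have h1 : k.choose (i + m) * (i + m).choose i = k.choose i * (k - i).choose m := by
          have := Nat.choose_mul (n := k) (show i ≤ i + m by omega)
          simpa [Nat.add_sub_cancel_left] using this
        have h1' : (k.choose (i + m) : ℂ) * ((i + m).choose i : ℂ)
            = (k.choose i : ℂ) * ((k - i).choose m : ℂ) := by exact_mod_cast h1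
        have h2 : k - (i + m) = (k - i) - m := by omega
        rw [h2, mul_right_comm, h1']
        ring
      rw [Finset.sum_congr rfl hterm, ← Finset.mul_sum]
      have halt : ∑ m ∈ Finset.range ((k - i) + 1),
          (((k - i).choose m : ℂ) * (-1) ^ ((k - i) - m)) = if (k - i) = 0 then 1 else 0 := by
        have := add_pow (1 : ℂ) (-1) (k - i)
        simp only [one_pow, one_mul] at this
        rw [show ((1 : ℂ) + -1) = 0 by ring, zero_pow_eq] at this
        rw [this]
        exact Finset.sum_congr rfl fun m _ => by ring
      rw [halt]
      by_cases hik2 : i = k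
      · simp [hik2]
      · have : ¬ (k - i = 0) := by omega
        simp [this, hik2]
    · have : ∀ j ∈ Finset.range (k + 1),
          (k.choose j : ℂ) * (-1) ^ (k - j) * (j.choose i : ℂ) = 0 := by
        intro j hj
        have : j < i := by have := Finset.mem_range.mp hj; omega
        rw [Nat.choose_eq_zero_of_lt this]; simp
      rw [Finset.sum_eq_zero this]
      have : ¬ (i = k) := by omega
      simp [this]
  have hre : ∀ j ∈ Finset.range (k + 1),
      (k.choose j : ℂ) * (-1) ^ (k - j) * (j.descFactorial i : ℂ)
      = (i.factorial : ℂ) * ((k.choose j : ℂ) * (-1) ^ (k - j) * (j.choose i : ℂ)) := by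
    intro j hj
    rw [Nat.descFactorial_eq_factorial_mul_choose]
    push_cast
    ring
  rw [Finset.sum_congr rfl hre, ← Finset.mul_sum, hcc]
  by_cases hik : i = k
  · simp [hik]
  · simp [hik]

theorem repr_by_deg_frobenius_euler (lam : ℝ) (hlam : lam ≠ 0) (u : ℂ) (hu : u ≠ 1)
    (h : ℕ → ℂ → ℂ)
    (hh : ∀ x : ℂ,
      (PowerSeries.mk fun n => h n x * (n.factorial : ℂ)⁻¹)
          * (degExp lam 1 - PowerSeries.C u)
        = (1 - u) • degExp lam x)
    (n : ℕ) (p : Polynomial ℂ) (hp : p.natDegree = n) (a : ℕ → ℂ)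
    (hpa : ∀ x : ℂ, p.eval x = ∑ k ∈ Finset.range (n + 1), a k * h k x) :
    ∀ k ≤ n,
      a k = (1 / ((1 - u) * (k.factorial : ℂ) * (lam : ℂ) ^ k))
        * ∑ j ∈ Finset.range (k + 1), (k.choose j : ℂ) * (-1) ^ (k - j)
            * (p.eval (1 + (j : ℂ) * (lam : ℂ)) - u * p.eval ((j : ℂ) * (lam : ℂ))) := by
  have hu1 : (1 : ℂ) - u ≠ 0 := sub_ne_zero.mpr (Ne.symm hu)
  have hD0 : degExp lam 1 - PowerSeries.C u ≠ 0 := by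
    intro hzero
    have hc0 : PowerSeries.constantCoeff (degExp lam 1 - PowerSeries.C u) = 0 := by
      rw [hzero]; simp
    have hc1 : PowerSeries.constantCoeff (degExp lam 1) = 1 := by
      rw [← PowerSeries.coeff_zero_eq_constantCoeff_apply, degExp_coeff]
      simp [dfeFF]
    rw [map_sub, hc1, PowerSeries.constantCoeff_C] at hc0
    exact hu1 hc0
  have hdiff : ∀ (x : ℂ) (k : ℕ), h k (x + 1) - u * h k x = (1 - u) * dfeFF lam k x := by
    intro x k
    have hser : (PowerSeries.mk fun m => h m (x + 1) * (m.factorial : ℂ)⁻¹)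
        - PowerSeries.C u * (PowerSeries.mk fun m => h m x * (m.factorial : ℂ)⁻¹)
        = (1 - u) • degExp lam x := by
      apply mul_right_cancel₀ hD0
      rw [sub_mul, mul_assoc, hh, hh, degExp_add_one]
      simp only [PowerSeries.smul_eq_C_mul]
      ring
    have hco := congrArg (PowerSeries.coeff k) hser
    rw [map_sub, PowerSeries.coeff_C_mul, PowerSeries.coeff_smul, PowerSeries.coeff_mk,
      PowerSeries.coeff_mk, degExp_coeff, smul_eq_mul] at hco
    have hkf : ((k.factorial : ℂ))⁻¹ ≠ 0 :=
      inv_ne_zero (Nat.cast_ne_zero.mpr (Nat.factorial_ne_zero _))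
    apply mul_right_cancel₀ hkf
    rw [sub_mul, mul_assoc]
    calc h k (x + 1) * (k.factorial : ℂ)⁻¹ - u * (h k x * (k.factorial : ℂ)⁻¹)
        = (1 - u) * (dfeFF lam k x * (k.factorial : ℂ)⁻¹) := hco
      _ = (1 - u) * dfeFF lam k x * (k.factorial : ℂ)⁻¹ := by ring
  intro k hk
  have hterm : ∀ j : ℕ,
      p.eval (1 + (j : ℂ) * (lam : ℂ)) - u * p.eval ((j : ℂ) * (lam : ℂ))
      = ∑ i ∈ Finset.range (n + 1),
          a i * ((1 - u) * ((lam : ℂ) ^ i * (j.descFactorial i : ℂ))) := by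
    intro j
    rw [hpa, hpa, Finset.mul_sum, ← Finset.sum_sub_distrib]
    refine Finset.sum_congr rfl fun i _ => ?_
    rw [← dfeFF_nat_mul]
    have h1 : (1 : ℂ) + (j : ℂ) * (lam : ℂ) = ((j : ℂ) * (lam : ℂ)) + 1 := by ring
    rw [h1, ← hdiff ((j : ℂ) * (lam : ℂ)) i]
    ring
  have hS : ∑ j ∈ Finset.range (k + 1), (k.choose j : ℂ) * (-1) ^ (k - j)
        * (p.eval (1 + (j : ℂ) * (lam : ℂ)) - u * p.eval ((j : ℂ) * (lam : ℂ)))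
      = (1 - u) * (k.factorial : ℂ) * (lam : ℂ) ^ k * a k := by
    calc ∑ j ∈ Finset.range (k + 1), (k.choose j : ℂ) * (-1) ^ (k - j)
          * (p.eval (1 + (j : ℂ) * (lam : ℂ)) - u * p.eval ((j : ℂ) * (lam : ℂ)))
        = ∑ j ∈ Finset.range (k + 1), ∑ i ∈ Finset.range (n + 1),
            (a i * (1 - u) * (lam : ℂ) ^ i)
              * ((k.choose j : ℂ) * (-1) ^ (k - j) * (j.descFactorial i : ℂ)) := by
          refine Finset.sum_congr rfl fun j _ => ?_
          rw [hterm j, Finset.mul_sum]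
          exact Finset.sum_congr rfl fun i _ => by ring
      _ = ∑ i ∈ Finset.range (n + 1), (a i * (1 - u) * (lam : ℂ) ^ i)
            * ∑ j ∈ Finset.range (k + 1),
                ((k.choose j : ℂ) * (-1) ^ (k - j) * (j.descFactorial i : ℂ)) := by
          rw [Finset.sum_comm]
          exact Finset.sum_congr rfl fun i _ => by rw [Finset.mul_sum]
      _ = ∑ i ∈ Finset.range (n + 1),
            (if i = k then a i * (1 - u) * (lam : ℂ) ^ i * (k.factorial : ℂ) else 0) := by
          refine Finset.sum_congr rfl fun i _ => ?_
          rw [dfe_alt_sum]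
          by_cases hik : i = k <;> simp [hik]
      _ = (1 - u) * (k.factorial : ℂ) * (lam : ℂ) ^ k * a k := by
          rw [Finset.sum_ite_eq' (Finset.range (n + 1)) k
            (fun i => a i * (1 - u) * (lam : ℂ) ^ i * (k.factorial : ℂ))]
          rw [if_pos (Finset.mem_range_succ_iff.mpr hk)]
          ring
  rw [hS]
  have hl0 : ((lam : ℂ)) ^ k ≠ 0 := pow_ne_zero _ (Complex.ofReal_ne_zero.mpr hlam)
  have hkf : (k.factorial : ℂ) ≠ 0 := Nat.cast_ne_zero.mpr (Nat.factorial_ne_zero _)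
  field_simp
end

section
/- Let λ ≠ 0 and let p(x) be a polynomial of degree n with complex coefficients. If p(x) = ∑_{k=0}^{n} a_k 𝓔_{k,λ}(x), then for each k, a_k = (1/(2 k! λ^k)) ∑_{j=0}^{k} C(k,j) (−1)^{k−j} (p(1 + jλ) + p(jλ)). -/
open Finset PowerSeries Polynomial

section Aux

lemma prod_cast_desc (j m : ℕ) :
    (∏ i ∈ Finset.range m, ((j:ℂ) - (i:ℂ))) = (j.descFactorial m : ℂ) := by
  rcases le_or_gt m j with h | h
  · induction m with
    | zero => simp
    | succ m ih =>
      rw [Finset.prod_range_succ, ih (le_of_lt (Nat.lt_of_succ_le h)),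
        Nat.descFactorial_succ]
      have hm : m ≤ j := le_of_lt (Nat.lt_of_succ_le h)
      push_cast [Nat.cast_sub hm]
      ring
  · have hj : j ∈ Finset.range m := Finset.mem_range.mpr h
    rw [Finset.prod_eq_zero hj (by simp), Nat.descFactorial_eq_zero_iff_lt.mpr h]
    simp

lemma diff_sum (lam : ℂ) (k m : ℕ) :
    ∑ j ∈ Finset.range (k+1), (k.choose j : ℂ) * (-1)^(k-j)
        * (∏ i ∈ Finset.range m, ((j:ℂ)*lam - (i:ℂ)*lam))
      = if m = k then (k.factorial : ℂ) * lam ^ k else 0 := by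
  have hP : ∀ j : ℕ, (∏ i ∈ Finset.range m, ((j:ℂ)*lam - (i:ℂ)*lam))
      = lam ^ m * (j.descFactorial m : ℂ) := by
    intro j
    rw [Finset.prod_congr rfl (fun i (_ : i ∈ Finset.range m) => show (j:ℂ)*lam - (i:ℂ)*lam = ((j:ℂ) - (i:ℂ))*lam by ring),
      Finset.prod_mul_distrib, Finset.prod_const, Finset.card_range, prod_cast_desc]
    ring
  simp only [hP, Nat.descFactorial_eq_factorial_mul_choose, Nat.cast_mul]
  rcases lt_or_ge k m with hm | hm
  · have : ∀ j ∈ Finset.range (k+1), (k.choose j : ℂ) * (-1)^(k-j)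
        * (lam ^ m * ((m.factorial : ℂ) * (j.choose m : ℂ))) = 0 := by
      intro j hj
      have : j.choose m = 0 :=
        Nat.choose_eq_zero_of_lt (lt_of_le_of_lt (Nat.lt_succ_iff.mp (Finset.mem_range.mp hj)) hm)
      simp [this]
    rw [Finset.sum_congr rfl this, Finset.sum_const_zero, if_neg (by omega)]
  · have hsub : Finset.Ico m (k+1) ⊆ Finset.range (k+1) := by
      intro x hx; simp only [Finset.mem_range, Finset.mem_Ico] at *; omega
    rw [← Finset.sum_subset hsub (by
      intro j hj hj2
      simp only [Finset.mem_range, Finset.mem_Ico, not_and, not_le] at hj hj2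
      have : j < m := by omega
      simp [Nat.choose_eq_zero_of_lt this])]
    rw [Finset.sum_Ico_eq_sum_range]
    have hkm : k + 1 - m = (k - m) + 1 := by omega
    rw [hkm]
    have hterm : ∀ i ∈ Finset.range (k - m + 1),
        (k.choose (m+i) : ℂ) * (-1)^(k-(m+i)) * (lam ^ m * ((m.factorial : ℂ) * ((m+i).choose m : ℂ)))
        = ((k.choose m : ℂ) * ((m.factorial : ℂ) * lam ^ m)) * ((1:ℂ)^i * (-1)^((k-m)-i) * ((k-m).choose i : ℂ)) := by
      intro i hi
      have hi' : i ≤ k - m := Nat.lt_succ_iff.mp (Finset.mem_range.mp hi)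
      have h1 : m + i ≤ k := by omega
      have h2 : m ≤ m + i := by omega
      have hcc : k.choose (m+i) * (m+i).choose m = k.choose m * (k - m).choose i := by
        have := Nat.choose_mul (n := k) h2
        simpa [Nat.add_sub_cancel_left] using this
      have hcast : (k.choose (m+i) : ℂ) * ((m+i).choose m : ℂ) = (k.choose m : ℂ) * ((k-m).choose i : ℂ) := by
        exact_mod_cast congrArg (Nat.cast : ℕ → ℂ) hcc
      have hexp : k - (m+i) = (k-m) - i := by omega
      rw [hexp]
      calc (k.choose (m+i) : ℂ) * (-1)^((k-m)-i) * (lam ^ m * ((m.factorial : ℂ) * ((m+i).choose m : ℂ)))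
          = ((k.choose (m+i) : ℂ) * ((m+i).choose m : ℂ)) * ((-1)^((k-m)-i) * lam ^ m * (m.factorial : ℂ)) := by ring
        _ = ((k.choose m : ℂ) * ((k-m).choose i : ℂ)) * ((-1)^((k-m)-i) * lam ^ m * (m.factorial : ℂ)) := by rw [hcast]
        _ = _ := by ring
    rw [Finset.sum_congr rfl hterm, ← Finset.mul_sum, ← add_pow (1:ℂ) (-1) (k-m)]
    have h11 : (1:ℂ) + (-1) = 0 := by ring
    rw [h11]
    rcases eq_or_lt_of_le hm with he | hlt
    · subst he; simp
    · rw [if_neg (by omega), zero_pow (by omega)]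
      ring

lemma P_add (lam : ℂ) : ∀ (n : ℕ) (x y : ℂ),
    (∏ i ∈ Finset.range n, (x + y - (i:ℂ)*lam)) =
      ∑ j ∈ Finset.range (n+1), (n.choose j : ℂ) *
        ((∏ i ∈ Finset.range j, (x - (i:ℂ)*lam)) * (∏ i ∈ Finset.range (n-j), (y - (i:ℂ)*lam)))
  | 0, x, y => by simp
  | (n+1), x, y => by
    rw [Finset.prod_range_succ, P_add lam n x y, Finset.sum_mul]
    have key : ∀ j ∈ Finset.range (n+1),
        (n.choose j : ℂ) * ((∏ i ∈ Finset.range j, (x - (i:ℂ)*lam)) * (∏ i ∈ Finset.range (n-j), (y - (i:ℂ)*lam))) * (x + y - (n:ℂ)*lam)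
        = (n.choose j : ℂ) * ((∏ i ∈ Finset.range (j+1), (x - (i:ℂ)*lam)) * (∏ i ∈ Finset.range (n-j), (y - (i:ℂ)*lam)))
          + (n.choose j : ℂ) * ((∏ i ∈ Finset.range j, (x - (i:ℂ)*lam)) * (∏ i ∈ Finset.range ((n-j)+1), (y - (i:ℂ)*lam))) := by
      intro j hj
      have hj' : j ≤ n := Nat.lt_succ_iff.mp (Finset.mem_range.mp hj)
      have hsub : ((n - j : ℕ) : ℂ) = (n : ℂ) - (j : ℂ) := Nat.cast_sub hj'
      rw [Finset.prod_range_succ, Finset.prod_range_succ, hsub]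
      ring
    rw [Finset.sum_congr rfl key, Finset.sum_add_distrib]
    have hS2 : (∑ j ∈ Finset.range (n+2), (n.choose j : ℂ) *
          ((∏ i ∈ Finset.range j, (x - (i:ℂ)*lam)) * (∏ i ∈ Finset.range (n+1-j), (y - (i:ℂ)*lam))))
        = ∑ j ∈ Finset.range (n+1), (n.choose j : ℂ) *
          ((∏ i ∈ Finset.range j, (x - (i:ℂ)*lam)) * (∏ i ∈ Finset.range ((n-j)+1), (y - (i:ℂ)*lam))) := by
      rw [Finset.sum_range_succ]
      rw [Nat.choose_succ_self]
      push_cast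
      rw [zero_mul, add_zero]
      refine Finset.sum_congr rfl fun j hj => ?_
      have hj' : j ≤ n := Nat.lt_succ_iff.mp (Finset.mem_range.mp hj)
      rw [Nat.succ_sub hj']
    have hS1 : (∑ j ∈ Finset.range (n+2), (n.choose j : ℂ) *
          ((∏ i ∈ Finset.range j, (x - (i:ℂ)*lam)) * (∏ i ∈ Finset.range (n+1-j), (y - (i:ℂ)*lam))))
        = ∑ j ∈ Finset.range (n+1), (n.choose (j+1) : ℂ) *
          ((∏ i ∈ Finset.range (j+1), (x - (i:ℂ)*lam)) * (∏ i ∈ Finset.range (n-j), (y - (i:ℂ)*lam)))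
          + (∏ i ∈ Finset.range (n+1), (y - (i:ℂ)*lam)) := by
      rw [Finset.sum_range_succ']
      simp only [Nat.succ_sub_succ, Nat.choose_zero_right, Nat.cast_one, one_mul,
        Finset.range_zero, Finset.prod_empty, Nat.sub_zero]
    symm
    rw [Finset.sum_range_succ' (fun j => ((n+1).choose j : ℂ) *
      ((∏ i ∈ Finset.range j, (x - (i:ℂ)*lam)) * (∏ i ∈ Finset.range (n+1-j), (y - (i:ℂ)*lam)))) (n+1)]
    simp only [Nat.succ_sub_succ, Nat.choose_zero_right, Nat.cast_one, one_mul,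
      Finset.range_zero, Finset.prod_empty, Nat.sub_zero]
    rw [← hS2, hS1]
    have hsplit : ∀ j ∈ Finset.range (n+1), ((n+1).choose (j+1) : ℂ) *
        ((∏ i ∈ Finset.range (j+1), (x - (i:ℂ)*lam)) * (∏ i ∈ Finset.range (n-j), (y - (i:ℂ)*lam)))
      = (n.choose j : ℂ) * ((∏ i ∈ Finset.range (j+1), (x - (i:ℂ)*lam)) * (∏ i ∈ Finset.range (n-j), (y - (i:ℂ)*lam)))
        + (n.choose (j+1) : ℂ) * ((∏ i ∈ Finset.range (j+1), (x - (i:ℂ)*lam)) * (∏ i ∈ Finset.range (n-j), (y - (i:ℂ)*lam))) := by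
      intro j hj
      rw [Nat.choose_succ_succ]
      push_cast
      ring
    rw [Finset.sum_congr rfl hsplit, Finset.sum_add_distrib]
    ring

lemma degExp_add (lam : ℝ) (x y : ℂ) :
    degExp lam (x + y) = degExp lam x * degExp lam y := by
  ext n
  rw [PowerSeries.coeff_mul, Finset.Nat.sum_antidiagonal_eq_sum_range_succ_mk]
  simp only [degExp, coeff_mk]
  rw [P_add (lam:ℂ) n x y, Finset.sum_mul]
  refine Finset.sum_congr rfl fun j hj => ?_
  have hj' : j ≤ n := Nat.lt_succ_iff.mp (Finset.mem_range.mp hj)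
  rw [Nat.cast_choose ℂ hj']
  have h1 : (j.factorial : ℂ) ≠ 0 := Nat.cast_ne_zero.mpr (Nat.factorial_ne_zero j)
  have h2 : ((n-j).factorial : ℂ) ≠ 0 := Nat.cast_ne_zero.mpr (Nat.factorial_ne_zero (n-j))
  have h3 : (n.factorial : ℂ) ≠ 0 := Nat.cast_ne_zero.mpr (Nat.factorial_ne_zero n)
  field_simp
  ring_nf
  rw [mul_comm]; congr 1; exact Finset.prod_congr rfl fun i _ => by ring

lemma E_add_one (lam : ℝ) (E : ℕ → ℂ → ℂ)
    (hE : ∀ x : ℂ,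
      (PowerSeries.mk fun n => E n x * (n.factorial : ℂ)⁻¹)
          * (degExp lam 1 + 1)
        = (2 : ℂ) • degExp lam x)
    (x : ℂ) (m : ℕ) :
    E m (x + 1) + E m x = 2 * ∏ i ∈ Finset.range m, (x - (i:ℂ) * (lam:ℂ)) := by
  have hne : degExp lam 1 + 1 ≠ 0 := by
    intro h
    have h0 := congrArg (PowerSeries.coeff 0) h
    simp [degExp] at h0
  have key : (PowerSeries.mk fun n => (E n (x+1) + E n x) * (n.factorial : ℂ)⁻¹)
      = (2:ℂ) • degExp lam x := by
    apply mul_right_cancel₀ hne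
    have hsplit : (PowerSeries.mk fun n => (E n (x+1) + E n x) * (n.factorial : ℂ)⁻¹)
        = (PowerSeries.mk fun n => E n (x+1) * (n.factorial:ℂ)⁻¹)
          + (PowerSeries.mk fun n => E n x * (n.factorial:ℂ)⁻¹) := by
      ext n; simp [add_mul]
    rw [hsplit, add_mul, hE (x+1), hE x, degExp_add lam x 1]
    rw [Algebra.smul_def, Algebra.smul_def]
    ring
  have := congrArg (PowerSeries.coeff m) key
  simp only [coeff_mk, map_smul, degExp, smul_eq_mul] at this
  have hfac : (m.factorial : ℂ) ≠ 0 := Nat.cast_ne_zero.mpr (Nat.factorial_ne_zero m)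
  field_simp at this
  exact this
  
end Aux

theorem repr_by_deg_euler (lam : ℝ) (hlam : lam ≠ 0)
    (E : ℕ → ℂ → ℂ)
    (hE : ∀ x : ℂ,
      (PowerSeries.mk fun n => E n x * (n.factorial : ℂ)⁻¹)
          * (degExp lam 1 + 1)
        = (2 : ℂ) • degExp lam x)
    (n : ℕ) (p : Polynomial ℂ) (hp : p.natDegree = n) (a : ℕ → ℂ)
    (hpa : ∀ x : ℂ, p.eval x = ∑ k ∈ Finset.range (n + 1), a k * E k x) :
    ∀ k ≤ n,
      a k = (1 / (2 * (k.factorial : ℂ) * (lam : ℂ) ^ k))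
        * ∑ j ∈ Finset.range (k + 1), (k.choose j : ℂ) * (-1) ^ (k - j)
            * (p.eval (1 + (j : ℂ) * (lam : ℂ)) + p.eval ((j : ℂ) * (lam : ℂ))) := by
  intro k hk
  have hfac : (k.factorial : ℂ) ≠ 0 := Nat.cast_ne_zero.mpr (Nat.factorial_ne_zero k)
  have hlamC : (lam : ℂ) ≠ 0 := Complex.ofReal_ne_zero.mpr hlam
  have hEsum : ∀ j : ℕ, p.eval (1 + (j:ℂ)*(lam:ℂ)) + p.eval ((j:ℂ)*(lam:ℂ))
      = ∑ m ∈ Finset.range (n+1), a m * (2 * ∏ i ∈ Finset.range m, ((j:ℂ)*(lam:ℂ) - (i:ℂ)*(lam:ℂ))) := by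
    intro j
    rw [hpa, hpa, ← Finset.sum_add_distrib]
    refine Finset.sum_congr rfl fun m _ => ?_
    rw [← mul_add]
    congr 1
    have h := E_add_one lam E hE ((j:ℂ)*(lam:ℂ)) m
    rw [add_comm ((j:ℂ)*(lam:ℂ)) 1] at h
    exact h
  have hmain : ∑ j ∈ Finset.range (k+1), (k.choose j : ℂ) * (-1)^(k-j)
        * (p.eval (1 + (j:ℂ)*(lam:ℂ)) + p.eval ((j:ℂ)*(lam:ℂ)))
      = a k * (2 * ((k.factorial : ℂ) * (lam:ℂ)^k)) := by
    rw [Finset.sum_congr rfl (fun j _ => by rw [hEsum j])]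
    simp_rw [Finset.mul_sum]
    rw [Finset.sum_comm]
    have hin : ∀ m ∈ Finset.range (n+1),
        (∑ j ∈ Finset.range (k+1), (k.choose j : ℂ) * (-1)^(k-j)
          * (a m * (2 * ∏ i ∈ Finset.range m, ((j:ℂ)*(lam:ℂ) - (i:ℂ)*(lam:ℂ)))))
        = if m = k then a m * (2 * ((k.factorial : ℂ) * (lam:ℂ)^k)) else 0 := by
      intro m _
      have : (∑ j ∈ Finset.range (k+1), (k.choose j : ℂ) * (-1)^(k-j)
          * (a m * (2 * ∏ i ∈ Finset.range m, ((j:ℂ)*(lam:ℂ) - (i:ℂ)*(lam:ℂ)))))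
          = a m * 2 * ∑ j ∈ Finset.range (k+1), (k.choose j : ℂ) * (-1)^(k-j)
              * (∏ i ∈ Finset.range m, ((j:ℂ)*(lam:ℂ) - (i:ℂ)*(lam:ℂ))) := by
        rw [Finset.mul_sum]
        exact Finset.sum_congr rfl fun j _ => by ring
      rw [this, diff_sum (lam:ℂ) k m]
      split_ifs with h
      · ring
      · ring
    rw [Finset.sum_congr rfl hin, Finset.sum_ite_eq' (Finset.range (n+1)) k
      (fun m => a m * (2 * ((k.factorial : ℂ) * (lam:ℂ)^k)))]
    rw [if_pos (Finset.mem_range.mpr (Nat.lt_succ_of_le hk))]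
  have hD : (2:ℂ) * (k.factorial:ℂ) * (lam:ℂ)^k ≠ 0 :=
    mul_ne_zero (mul_ne_zero two_ne_zero hfac) (pow_ne_zero _ hlamC)
  rw [hmain, div_mul_eq_mul_div, one_mul, eq_comm, div_eq_iff hD]
  ring
end

section
/- Let u ≠ 1 and let p(x) be a polynomial of degree n with complex coefficients. If p(x) = ∑_{k=0}^{n} a_k H_k(x|u), then a_k = (1/((1−u) k!)) (p^{(k)}(1) − u·p^{(k)}(0)) for each k, where p^{(k)} denotes the k-th derivative. -/
open Finset PowerSeries Polynomial

theorem repr_by_frobenius_euler (u : ℂ) (hu : u ≠ 1) (H : ℕ → Polynomial ℂ)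
    (hH : ∀ x : ℂ,
      (PowerSeries.mk fun n => (H n).eval x * (n.factorial : ℂ)⁻¹)
          * (PowerSeries.exp ℂ - PowerSeries.C u)
        = (1 - u) • PowerSeries.rescale x (PowerSeries.exp ℂ))
    (n : ℕ) (p : Polynomial ℂ) (hp : p.natDegree = n) (a : ℕ → ℂ)
    (hpa : p = ∑ k ∈ Finset.range (n + 1), a k • H k) :
    ∀ k ≤ n,
      a k = (1 / ((1 - u) * (k.factorial : ℂ)))
        * ((Polynomial.derivative^[k] p).eval 1 - u * (Polynomial.derivative^[k] p).eval 0) := by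
  have hu' : (1 : ℂ) - u ≠ 0 := sub_ne_zero.mpr (Ne.symm hu)
  have hexp : PowerSeries.exp ℂ - PowerSeries.C u ≠ 0 := by
    intro h
    apply hu'
    have := congrArg (PowerSeries.constantCoeff) h
    simpa [PowerSeries.constantCoeff_exp] using this
  -- Step 1: the power series identity  M_{x+1} - C u * M_x = (1-u) • rescale x exp
  have step1 : ∀ x : ℂ,
      (PowerSeries.mk fun n => (H n).eval (x + 1) * (n.factorial : ℂ)⁻¹)
        - PowerSeries.C u * (PowerSeries.mk fun n => (H n).eval x * (n.factorial : ℂ)⁻¹)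
      = (1 - u) • PowerSeries.rescale x (PowerSeries.exp ℂ) := by
    intro x
    apply mul_right_cancel₀ hexp
    have h1 := hH x
    have h2 := hH (x + 1)
    have hres : PowerSeries.rescale (x + 1) (PowerSeries.exp ℂ)
        = PowerSeries.rescale x (PowerSeries.exp ℂ) * PowerSeries.exp ℂ := by
      rw [← PowerSeries.exp_mul_exp_eq_exp_add x 1, PowerSeries.rescale_one]
      rfl
    rw [sub_mul, h2, mul_assoc, h1, hres]
    simp only [PowerSeries.smul_eq_C_mul]
    ring
  -- Step 2: the pointwise identity  H_m(x+1) - u H_m(x) = (1-u) x^m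
  have step2 : ∀ (m : ℕ) (x : ℂ),
      (H m).eval (x + 1) - u * (H m).eval x = (1 - u) * x ^ m := by
    intro m x
    have := congrArg (PowerSeries.coeff m) (step1 x)
    simp only [map_sub, PowerSeries.coeff_mk, PowerSeries.coeff_C_mul, PowerSeries.coeff_smul,
      PowerSeries.coeff_rescale, PowerSeries.coeff_exp, smul_eq_mul] at this
    have hfac : (m.factorial : ℂ) ≠ 0 := Nat.cast_ne_zero.mpr m.factorial_ne_zero
    have halg : (algebraMap ℚ ℂ) (1 / (m.factorial : ℚ)) = (m.factorial : ℂ)⁻¹ := by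
      push_cast [map_div₀]
      simp
    rw [halg] at this
    field_simp at this
    linear_combination this
  -- Step 3: polynomial identity
  have step3 : ∀ m : ℕ,
      (H m).comp (Polynomial.X + Polynomial.C 1) - Polynomial.C u * H m
        = Polynomial.C (1 - u) * Polynomial.X ^ m := by
    intro m
    apply Polynomial.funext
    intro x
    simp [Polynomial.eval_comp, step2 m x]
  -- iterated derivative commutes with comp (X + C 1)
  have hcomp : ∀ (q : Polynomial ℂ) (k : ℕ),
      Polynomial.derivative^[k] (q.comp (Polynomial.X + Polynomial.C 1))
        = (Polynomial.derivative^[k] q).comp (Polynomial.X + Polynomial.C 1) := by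
    intro q k
    induction k generalizing q with
    | zero => simp
    | succ k ih =>
      rw [Function.iterate_succ_apply, Function.iterate_succ_apply,
        Polynomial.derivative_comp, Polynomial.derivative_X_add_C, one_mul, ih]
  -- Step 4: L(derivative^[k] H_m) = (1-u) * (k! if m = k else 0)
  have step4 : ∀ (m k : ℕ),
      (Polynomial.derivative^[k] (H m)).eval 1 - u * (Polynomial.derivative^[k] (H m)).eval 0
        = (1 - u) * (if m = k then (k.factorial : ℂ) else 0) := by
    intro m k
    have := congrArg (fun q => (Polynomial.derivative^[k] q).eval 0) (step3 m)
    simp only [Polynomial.iterate_derivative_sub, Polynomial.iterate_derivative_C_mul,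
      hcomp, Polynomial.eval_sub, Polynomial.eval_comp, Polynomial.eval_add, Polynomial.eval_X,
      Polynomial.eval_C, Polynomial.eval_mul, zero_add,
      Polynomial.iterate_derivative_X_pow_eq_C_mul, Polynomial.eval_pow] at this
    rw [this]
    rcases lt_trichotomy m k with h | h | h
    · simp [Nat.descFactorial_eq_zero_iff_lt.mpr h, Nat.ne_of_lt h]
    · subst h
      simp [Nat.descFactorial_self]
    · have : (0 : ℂ) ^ (m - k) = 0 := by
        apply zero_pow
        omega
      simp [this, Nat.ne_of_gt h]
  -- Final computation
  intro k hk
  have hps : (Polynomial.derivative^[k] p).eval 1 - u * (Polynomial.derivative^[k] p).eval 0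
      = a k * ((1 - u) * (k.factorial : ℂ)) := by
    rw [hpa, Polynomial.iterate_derivative_sum]
    simp only [Polynomial.iterate_derivative_smul, Polynomial.eval_finset_sum,
      Polynomial.eval_smul, smul_eq_mul]
    rw [Finset.mul_sum, ← Finset.sum_sub_distrib]
    have : ∀ m ∈ Finset.range (n + 1),
        a m * (Polynomial.derivative^[k] (H m)).eval 1
          - u * (a m * (Polynomial.derivative^[k] (H m)).eval 0)
        = a m * ((1 - u) * (if m = k then (k.factorial : ℂ) else 0)) := by
      intro m _
      rw [← step4 m k]
      ring
    rw [Finset.sum_congr rfl this]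
    rw [Finset.sum_eq_single k]
    · simp
    · intro m _ hmk; simp [hmk]
    · intro h; exact absurd (Finset.mem_range.mpr (by omega)) h
  rw [hps]
  have hfac : (k.factorial : ℂ) ≠ 0 := Nat.cast_ne_zero.mpr k.factorial_ne_zero
  field_simp
end

section
/- Let r ≥ 1, u ≠ 1, and let p(x) be a polynomial of degree n with complex coefficients. If p(x) = ∑_{k=0}^{n} a_k H^{(r)}_k(x|u), then a_k = (1/((1−u)^r k!)) ∑_{j=0}^{r} C(r,j) (−u)^{r−j} p^{(k)}(j) for each k. -/
open Finset PowerSeries Polynomial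


noncomputable def feC (u : ℂ) (r : ℕ) (m : ℕ) : ℂ :=
  PowerSeries.coeff m ((PowerSeries.exp ℂ - PowerSeries.C u) ^ r)

lemma feC_zero (u : ℂ) (r : ℕ) : feC u r 0 = (1 - u) ^ r := by
  unfold feC
  rw [PowerSeries.coeff_zero_eq_constantCoeff, map_pow, map_sub, PowerSeries.constantCoeff_exp,
    PowerSeries.constantCoeff_C]

lemma feC_eq (u : ℂ) (r : ℕ) (m : ℕ) :
    feC u r m = ∑ j ∈ Finset.range (r + 1),
      (r.choose j : ℂ) * (-u) ^ (r - j) * ((j : ℂ) ^ m * (m.factorial : ℂ)⁻¹) := by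
  unfold feC
  have h1 : PowerSeries.exp ℂ - PowerSeries.C u
      = PowerSeries.exp ℂ + PowerSeries.C (-u) := by rw [map_neg]; ring
  rw [h1, add_pow, map_sum]
  refine Finset.sum_congr rfl fun j hj => ?_
  rw [PowerSeries.exp_pow_eq_rescale_exp, ← map_pow, ← map_natCast (PowerSeries.C (R := ℂ)) (r.choose j)]
  rw [mul_assoc, ← map_mul, PowerSeries.coeff_mul_C, PowerSeries.coeff_rescale,
    PowerSeries.coeff_exp]
  push_cast
  field_simp

lemma fe_tri {M : Type*} [AddCommGroup M] [Module ℂ M] [NoZeroSMulDivisors ℂ M]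
    (d : ℕ → ℂ) (hd : d 0 ≠ 0) (v : ℕ → M)
    (h : ∀ m, ∑ i ∈ Finset.range (m + 1), d (m - i) • v i = 0) : ∀ m, v m = 0 := by
  intro m
  induction m using Nat.strong_induction_on with
  | _ m ih =>
    have hm := h m
    rw [Finset.sum_range_succ, Finset.sum_eq_zero (fun i hi => by
      rw [ih i (Finset.mem_range.mp hi), smul_zero]), zero_add, Nat.sub_self] at hm
    exact (smul_eq_zero.mp hm).resolve_left hd

lemma fe_key (r : ℕ) (u : ℂ) (H : ℕ → Polynomial ℂ)
    (hH : ∀ x : ℂ,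
      (PowerSeries.mk fun n => (H n).eval x * (n.factorial : ℂ)⁻¹)
          * (PowerSeries.exp ℂ - PowerSeries.C u) ^ r
        = ((1 - u) ^ r) • PowerSeries.rescale x (PowerSeries.exp ℂ))
    (x : ℂ) (m : ℕ) :
    ∑ i ∈ Finset.range (m + 1), (H i).eval x * (i.factorial : ℂ)⁻¹ * feC u r (m - i)
      = (1 - u) ^ r * (x ^ m * (m.factorial : ℂ)⁻¹) := by
  have h := congrArg (PowerSeries.coeff m) (hH x)
  rw [PowerSeries.coeff_mul, Finset.Nat.sum_antidiagonal_eq_sum_range_succ_mk,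
    PowerSeries.coeff_smul, PowerSeries.coeff_rescale, PowerSeries.coeff_exp] at h
  simp only [PowerSeries.coeff_mk] at h
  unfold feC
  rw [show m + 1 = m.succ from rfl, h, smul_eq_mul]
  push_cast
  norm_num

lemma fe_key_poly (r : ℕ) (u : ℂ) (H : ℕ → Polynomial ℂ)
    (hH : ∀ x : ℂ,
      (PowerSeries.mk fun n => (H n).eval x * (n.factorial : ℂ)⁻¹)
          * (PowerSeries.exp ℂ - PowerSeries.C u) ^ r
        = ((1 - u) ^ r) • PowerSeries.rescale x (PowerSeries.exp ℂ))
    (m : ℕ) :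
    ∑ i ∈ Finset.range (m + 1), ((i.factorial : ℂ)⁻¹ * feC u r (m - i)) • H i
      = Polynomial.C ((1 - u) ^ r * (m.factorial : ℂ)⁻¹) * Polynomial.X ^ m := by
  apply Polynomial.funext
  intro x
  rw [Polynomial.eval_finset_sum]
  simp only [Polynomial.eval_smul, Polynomial.eval_mul, Polynomial.eval_C, Polynomial.eval_pow,
    Polynomial.eval_X, smul_eq_mul]
  have := fe_key r u H hH x m
  calc ∑ i ∈ Finset.range (m + 1), (i.factorial : ℂ)⁻¹ * feC u r (m - i) * (H i).eval x
      = ∑ i ∈ Finset.range (m + 1), (H i).eval x * (i.factorial : ℂ)⁻¹ * feC u r (m - i) :=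
        Finset.sum_congr rfl fun i _ => by ring
    _ = (1 - u) ^ r * (x ^ m * (m.factorial : ℂ)⁻¹) := this
    _ = (1 - u) ^ r * (m.factorial : ℂ)⁻¹ * x ^ m := by ring

section
variable (r : ℕ) (u : ℂ) (hu : u ≠ 1) (H : ℕ → Polynomial ℂ)
    (hH : ∀ x : ℂ,
      (PowerSeries.mk fun n => (H n).eval x * (n.factorial : ℂ)⁻¹)
          * (PowerSeries.exp ℂ - PowerSeries.C u) ^ r
        = ((1 - u) ^ r) • PowerSeries.rescale x (PowerSeries.exp ℂ))

include hu hH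

omit hH in
lemma fe_ne : (1 - u) ^ r ≠ 0 :=
  pow_ne_zero _ (sub_ne_zero.mpr (Ne.symm hu))

lemma fe_H0 : H 0 = 1 := by
  have h := fe_key_poly r u H hH 0
  rw [Finset.sum_range_one] at h
  simp only [Nat.factorial_zero, Nat.cast_one, inv_one, one_mul, feC_zero, pow_zero,
    mul_one, Nat.sub_self] at h
  have hne := fe_ne r u hu
  apply smul_right_injective (Polynomial ℂ) hne
  show (1 - u) ^ r • H 0 = (1 - u) ^ r • (1 : Polynomial ℂ)
  rw [h, Polynomial.smul_eq_C_mul, mul_one]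

lemma fe_deriv : ∀ m, Polynomial.derivative (H (m + 1)) = (((m + 1 : ℕ)) : ℂ) • H m := by
  have hne := fe_ne r u hu
  have hd0 : feC u r 0 ≠ 0 := by rw [feC_zero]; exact hne
  have H0 := fe_H0 r u hu H hH
  have hstep : ∀ m, ∑ i ∈ Finset.range (m + 1), feC u r (m - i) •
      (fun j => (((j + 1).factorial : ℂ))⁻¹ •
        (Polynomial.derivative (H (j + 1)) - (((j + 1 : ℕ)) : ℂ) • H j)) i = 0 := by
    intro m
    have A := congrArg Polynomial.derivative (fe_key_poly r u H hH (m + 1))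
    rw [map_sum, Finset.sum_range_succ'] at A
    simp only [derivative_smul, Nat.succ_sub_succ] at A
    rw [H0, Polynomial.derivative_one, smul_zero, add_zero, Polynomial.derivative_C_mul,
      Polynomial.derivative_X_pow, Nat.add_sub_cancel] at A
    have hfac : ∀ j : ℕ, (((j + 1).factorial : ℂ))⁻¹ * ((j + 1 : ℕ) : ℂ) = ((j.factorial : ℂ))⁻¹ := by
      intro j
      have h1 : ((j : ℂ) + 1) ≠ 0 := Nat.cast_add_one_ne_zero j
      have h2 : (j.factorial : ℂ) ≠ 0 := Nat.cast_ne_zero.mpr (Nat.factorial_ne_zero j)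
      rw [Nat.factorial_succ]
      push_cast
      field_simp
    show ∑ j ∈ Finset.range (m + 1), feC u r (m - j) •
        ((((j + 1).factorial : ℂ))⁻¹ •
          (Polynomial.derivative (H (j + 1)) - (((j + 1 : ℕ)) : ℂ) • H j)) = 0
    calc ∑ j ∈ Finset.range (m + 1), feC u r (m - j) •
            ((((j + 1).factorial : ℂ))⁻¹ •
              (Polynomial.derivative (H (j + 1)) - (((j + 1 : ℕ)) : ℂ) • H j))
        = (∑ j ∈ Finset.range (m + 1), (((j + 1).factorial : ℂ)⁻¹ * feC u r (m - j)) •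
              Polynomial.derivative (H (j + 1)))
          - ∑ j ∈ Finset.range (m + 1), ((j.factorial : ℂ)⁻¹ * feC u r (m - j)) • H j := by
          rw [← Finset.sum_sub_distrib]
          refine Finset.sum_congr rfl fun j _ => ?_
          rw [← hfac j]
          module
      _ = Polynomial.C ((1 - u) ^ r * (((m + 1).factorial : ℂ))⁻¹)
              * (Polynomial.C ((m + 1 : ℕ) : ℂ) * Polynomial.X ^ m)
          - Polynomial.C ((1 - u) ^ r * ((m.factorial : ℂ))⁻¹) * Polynomial.X ^ m := by
          rw [A, fe_key_poly r u H hH m]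
      _ = 0 := by
          rw [sub_eq_zero, ← mul_assoc, ← Polynomial.C_mul]
          congr 2
          rw [mul_assoc, hfac m]
  have key := fe_tri (feC u r) hd0
    (fun j => (((j + 1).factorial : ℂ))⁻¹ •
      (Polynomial.derivative (H (j + 1)) - (((j + 1 : ℕ)) : ℂ) • H j)) hstep
  intro m
  have hm := key m
  simp only [smul_eq_zero, _root_.inv_eq_zero, Nat.cast_eq_zero] at hm
  have := hm.resolve_left (Nat.factorial_ne_zero _)
  exact sub_eq_zero.mp this

end

lemma fe_S (r : ℕ) (u : ℂ) (hu : u ≠ 1) (H : ℕ → Polynomial ℂ)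
    (hH : ∀ x : ℂ,
      (PowerSeries.mk fun n => (H n).eval x * (n.factorial : ℂ)⁻¹)
          * (PowerSeries.exp ℂ - PowerSeries.C u) ^ r
        = ((1 - u) ^ r) • PowerSeries.rescale x (PowerSeries.exp ℂ)) :
    ∀ i, ∑ j ∈ Finset.range (r + 1), (r.choose j : ℂ) * (-u) ^ (r - j) * (H i).eval ((j : ℕ) : ℂ)
      = if i = 0 then (1 - u) ^ r else 0 := by
  have hne : (1 - u) ^ r ≠ 0 := pow_ne_zero _ (sub_ne_zero.mpr (Ne.symm hu))
  have hd0 : feC u r 0 ≠ 0 := by rw [feC_zero]; exact hne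
  set S : ℕ → ℂ := fun i =>
    ∑ j ∈ Finset.range (r + 1), (r.choose j : ℂ) * (-u) ^ (r - j) * (H i).eval ((j : ℕ) : ℂ) with hS
  have hstep : ∀ m, ∑ i ∈ Finset.range (m + 1), feC u r (m - i) •
      (fun i => (i.factorial : ℂ)⁻¹ • (S i - if i = 0 then (1 - u) ^ r else 0)) i = 0 := by
    intro m
    have hA : ∑ i ∈ Finset.range (m + 1), feC u r (m - i) * ((i.factorial : ℂ)⁻¹ * S i)
        = (1 - u) ^ r * feC u r m := by
      calc ∑ i ∈ Finset.range (m + 1), feC u r (m - i) * ((i.factorial : ℂ)⁻¹ * S i)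
          = ∑ i ∈ Finset.range (m + 1), ∑ j ∈ Finset.range (r + 1),
              (r.choose j : ℂ) * (-u) ^ (r - j)
                * ((H i).eval ((j : ℕ) : ℂ) * (i.factorial : ℂ)⁻¹ * feC u r (m - i)) := by
            refine Finset.sum_congr rfl fun i _ => ?_
            rw [hS, Finset.mul_sum, Finset.mul_sum]
            exact Finset.sum_congr rfl fun j _ => by ring
        _ = ∑ j ∈ Finset.range (r + 1), (r.choose j : ℂ) * (-u) ^ (r - j)
              * ((1 - u) ^ r * (((j : ℕ) : ℂ) ^ m * (m.factorial : ℂ)⁻¹)) := by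
            rw [Finset.sum_comm]
            refine Finset.sum_congr rfl fun j _ => ?_
            rw [← Finset.mul_sum, fe_key r u H hH]
        _ = (1 - u) ^ r * feC u r m := by
            rw [feC_eq, Finset.mul_sum]
            exact Finset.sum_congr rfl fun j _ => by ring
    have hB : ∑ i ∈ Finset.range (m + 1), feC u r (m - i)
          * ((i.factorial : ℂ)⁻¹ * (if i = 0 then (1 - u) ^ r else 0))
        = (1 - u) ^ r * feC u r m := by
      rw [Finset.sum_eq_single_of_mem 0 (Finset.mem_range.mpr (Nat.succ_pos m))]
      · simp
        ring
      · intro i _ hi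
        simp [hi]
    simp only [smul_eq_mul, mul_sub, Finset.sum_sub_distrib]
    rw [sub_eq_zero]
    calc ∑ i ∈ Finset.range (m + 1), feC u r (m - i) * ((i.factorial : ℂ)⁻¹ * S i)
        = (1 - u) ^ r * feC u r m := hA
      _ = ∑ i ∈ Finset.range (m + 1), feC u r (m - i)
            * ((i.factorial : ℂ)⁻¹ * (if i = 0 then (1 - u) ^ r else 0)) := hB.symm
  have key := fe_tri (feC u r) hd0 _ hstep
  intro i
  have hi := key i
  simp only [smul_eq_zero, _root_.inv_eq_zero, Nat.cast_eq_zero] at hi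
  have := hi.resolve_left (Nat.factorial_ne_zero _)
  exact sub_eq_zero.mp this

section
variable (H : ℕ → Polynomial ℂ)


include H in
lemma fe_iter (hD : ∀ m, Polynomial.derivative (H (m + 1)) = (((m + 1 : ℕ)) : ℂ) • H m) :
    ∀ k m, k ≤ m → (Polynomial.derivative (R := ℂ))^[k] (H m)
      = ((m.descFactorial k : ℕ) : ℂ) • H (m - k) := by
  intro k
  induction k with
  | zero => intro m _; simp
  | succ k ih =>
    intro m hk
    obtain ⟨m', rfl⟩ : ∃ m', m = m' + 1 := ⟨m - 1, by omega⟩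
    rw [Function.iterate_succ_apply, hD m', Polynomial.iterate_derivative_smul,
      ih m' (by omega), smul_smul, Nat.succ_descFactorial_succ]
    push_cast
    rfl

include H in
lemma fe_iter_zero (h0 : H 0 = 1)
    (hD : ∀ m, Polynomial.derivative (H (m + 1)) = (((m + 1 : ℕ)) : ℂ) • H m) :
    ∀ k m, m < k → (Polynomial.derivative (R := ℂ))^[k] (H m) = 0 := by
  have base : ∀ m, (Polynomial.derivative (R := ℂ))^[m + 1] (H m) = 0 := by
    intro m
    rw [Function.iterate_succ_apply', fe_iter H hD m m le_rfl, Nat.sub_self, h0,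
      Polynomial.derivative_smul, Polynomial.derivative_one, smul_zero]
  intro k m hm
  obtain ⟨j, rfl⟩ : ∃ j, k = j + (m + 1) := ⟨k - (m + 1), by omega⟩
  rw [Function.iterate_add_apply, base m, Polynomial.iterate_derivative_zero]

end

theorem repr_by_higher_order_frobenius_euler (r : ℕ) (hr : 1 ≤ r) (u : ℂ) (hu : u ≠ 1)
    (H : ℕ → Polynomial ℂ)
    (hH : ∀ x : ℂ,
      (PowerSeries.mk fun n => (H n).eval x * (n.factorial : ℂ)⁻¹)
          * (PowerSeries.exp ℂ - PowerSeries.C u) ^ r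
        = ((1 - u) ^ r) • PowerSeries.rescale x (PowerSeries.exp ℂ))
    (n : ℕ) (p : Polynomial ℂ) (hp : p.natDegree = n) (a : ℕ → ℂ)
    (hpa : p = ∑ k ∈ Finset.range (n + 1), a k • H k) :
    ∀ k ≤ n,
      a k = (1 / ((1 - u) ^ r * (k.factorial : ℂ)))
        * ∑ j ∈ Finset.range (r + 1), (r.choose j : ℂ) * (-u) ^ (r - j)
            * (Polynomial.derivative^[k] p).eval (j : ℂ) := by
  have hS := fe_S r u hu H hH
  have h0 := fe_H0 r u hu H hH
  have hD := fe_deriv r u hu H hH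
  intro k hk
  have hne : (1 - u) ^ r ≠ 0 := pow_ne_zero _ (sub_ne_zero.mpr (Ne.symm hu))
  have hkf : (k.factorial : ℂ) ≠ 0 := Nat.cast_ne_zero.mpr (Nat.factorial_ne_zero k)
  have hdp : ∀ K : ℕ, (Polynomial.derivative (R := ℂ))^[K] p
      = ∑ m ∈ Finset.range (n + 1), a m • (Polynomial.derivative (R := ℂ))^[K] (H m) := by
    intro K
    rw [hpa]
    induction K with
    | zero => simp
    | succ K ih =>
      rw [Function.iterate_succ_apply', ih, Polynomial.derivative_sum]
      refine Finset.sum_congr rfl fun m _ => ?_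
      rw [Polynomial.derivative_smul, Function.iterate_succ_apply']
  have hL : ∀ m, ∑ j ∈ Finset.range (r + 1), (r.choose j : ℂ) * (-u) ^ (r - j)
        * ((Polynomial.derivative (R := ℂ))^[k] (H m)).eval ((j : ℕ) : ℂ)
      = if m = k then (1 - u) ^ r * (k.factorial : ℂ) else 0 := by
    intro m
    rcases lt_or_ge m k with hmk | hmk
    · rw [fe_iter_zero H h0 hD k m hmk]
      simp [Nat.ne_of_lt hmk]
    · rw [fe_iter H hD k m hmk]
      simp only [Polynomial.eval_smul, smul_eq_mul]
      have : ∑ j ∈ Finset.range (r + 1), (r.choose j : ℂ) * (-u) ^ (r - j)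
            * (((m.descFactorial k : ℕ) : ℂ) * (H (m - k)).eval ((j : ℕ) : ℂ))
          = ((m.descFactorial k : ℕ) : ℂ) * ∑ j ∈ Finset.range (r + 1),
              (r.choose j : ℂ) * (-u) ^ (r - j) * (H (m - k)).eval ((j : ℕ) : ℂ) := by
        rw [Finset.mul_sum]; exact Finset.sum_congr rfl fun j _ => by ring
      rw [this, hS]
      rcases eq_or_ne m k with rfl | hne'
      · simp [Nat.descFactorial_self]; ring
      · have : m - k ≠ 0 := by omega
        simp [this, hne']
  have hT : ∑ j ∈ Finset.range (r + 1), (r.choose j : ℂ) * (-u) ^ (r - j)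
        * ((Polynomial.derivative (R := ℂ))^[k] p).eval ((j : ℕ) : ℂ)
      = a k * ((1 - u) ^ r * (k.factorial : ℂ)) := by
    calc ∑ j ∈ Finset.range (r + 1), (r.choose j : ℂ) * (-u) ^ (r - j)
          * ((Polynomial.derivative (R := ℂ))^[k] p).eval ((j : ℕ) : ℂ)
        = ∑ j ∈ Finset.range (r + 1), ∑ m ∈ Finset.range (n + 1),
            a m * ((r.choose j : ℂ) * (-u) ^ (r - j)
              * ((Polynomial.derivative (R := ℂ))^[k] (H m)).eval ((j : ℕ) : ℂ)) := by
          refine Finset.sum_congr rfl fun j _ => ?_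
          rw [hdp k, Polynomial.eval_finset_sum, Finset.mul_sum]
          refine Finset.sum_congr rfl fun m _ => ?_
          rw [Polynomial.eval_smul, smul_eq_mul]; ring
      _ = ∑ m ∈ Finset.range (n + 1), a m * ∑ j ∈ Finset.range (r + 1),
            (r.choose j : ℂ) * (-u) ^ (r - j)
              * ((Polynomial.derivative (R := ℂ))^[k] (H m)).eval ((j : ℕ) : ℂ) := by
          rw [Finset.sum_comm]
          exact Finset.sum_congr rfl fun m _ => by rw [Finset.mul_sum]
      _ = ∑ m ∈ Finset.range (n + 1), a m
            * (if m = k then (1 - u) ^ r * (k.factorial : ℂ) else 0) :=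
          Finset.sum_congr rfl fun m _ => by rw [hL m]
      _ = a k * ((1 - u) ^ r * (k.factorial : ℂ)) := by
          rw [Finset.sum_eq_single_of_mem k (Finset.mem_range.mpr (by omega))]
          · simp
          · intro m _ hmk; simp [hmk]
  rw [hT]
  field_simp
end

section
/- For u ≠ 1, v ≠ 1 with uv ≠ 1, and nonnegative integers m, n: H_m(x|u) H_n(x|v) = H_{m+n}(x|uv) + (u(1−v)/(1−uv)) ∑_{r=1}^{m} C(m,r) H_r(u) H_{m+n−r}(x|uv) + (v(1−u)/(1−uv)) ∑_{s=1}^{n} C(n,s) H_s(v) H_{m+n−s}(x|uv). -/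
open Finset PowerSeries

private lemma factC_ne (k : ℕ) : ((k.factorial : ℂ)) ≠ 0 :=
  Nat.cast_ne_zero.mpr k.factorial_ne_zero

private lemma coeff_exp_c (k : ℕ) : coeff (R := ℂ) k (exp ℂ) = ((k.factorial : ℂ))⁻¹ := by
  rw [PowerSeries.coeff_exp, one_div, map_inv₀]; norm_num

private lemma rel_of (c : ℕ → ℂ) (w x : ℂ)
    (h : (PowerSeries.mk fun k => c k * (k.factorial : ℂ)⁻¹) * (exp ℂ - C (R := ℂ) w)
      = (1 - w) • rescale x (exp ℂ)) (N : ℕ) :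
    ∑ k ∈ range (N+1), (N.choose k : ℂ) * c k - w * c N = (1 - w) * x ^ N := by
  have h' := congrArg (coeff (R := ℂ) N) h
  rw [mul_sub, map_sub, PowerSeries.coeff_mul, PowerSeries.coeff_mul_C] at h'
  simp only [coeff_mk, map_smul, PowerSeries.coeff_rescale, coeff_exp_c, smul_eq_mul] at h'
  have key : ∑ k ∈ range (N+1), (N.choose k : ℂ) * c k
      = (N.factorial : ℂ) * ∑ p ∈ antidiagonal N, c p.1 * ((p.1.factorial : ℂ))⁻¹ * ((p.2.factorial : ℂ))⁻¹ := by
    rw [Finset.Nat.sum_antidiagonal_eq_sum_range_succ_mk, Finset.mul_sum]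
    refine Finset.sum_congr rfl fun k hk => ?_
    have hk' : k ≤ N := Nat.lt_succ_iff.mp (Finset.mem_range.mp hk)
    rw [Nat.cast_choose ℂ hk']
    field_simp
  rw [key]
  have hS : ∑ p ∈ antidiagonal N, c p.1 * ((p.1.factorial : ℂ))⁻¹ * ((p.2.factorial : ℂ))⁻¹
      = (1 - w) * (x ^ N * (N.factorial : ℂ)⁻¹) + c N * (N.factorial : ℂ)⁻¹ * w := by
    linear_combination h'
  rw [hS]
  have hN := factC_ne N
  field_simp
  ring

private lemma tri_rect (m n : ℕ) (F : ℕ → ℕ → ℂ)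
    (hF : ∀ i j, (m < i ∨ n < j) → F i j = 0) :
    ∑ k ∈ range (m+n+1), ∑ p ∈ antidiagonal k, F p.1 p.2
      = ∑ i ∈ range (m+1), ∑ j ∈ range (n+1), F i j := by
  classical
  have hdisj : ((range (m+n+1) : Finset ℕ) : Set ℕ).PairwiseDisjoint (fun k => antidiagonal k) := by
    intro a _ b _ hab
    simp only [Finset.disjoint_left]
    intro p hpa hpb
    rw [Finset.HasAntidiagonal.mem_antidiagonal] at hpa hpb
    exact hab (hpa ▸ hpb ▸ rfl)
  rw [← Finset.sum_biUnion hdisj, ← Finset.sum_product']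
  refine (Finset.sum_subset ?_ ?_).symm
  · intro p hp
    simp only [Finset.mem_product, Finset.mem_range] at hp
    exact Finset.mem_biUnion.mpr ⟨p.1 + p.2, Finset.mem_range.mpr (by omega),
      Finset.HasAntidiagonal.mem_antidiagonal.mpr rfl⟩
  · intro p _ hp
    simp only [Finset.mem_product, Finset.mem_range, not_and_or, not_lt] at hp
    apply hF
    rcases hp with h | h
    · exact Or.inl (Nat.lt_of_succ_le h)
    · exact Or.inr (Nat.lt_of_succ_le h)

private lemma rel2_of (c : ℕ → ℂ) (w x : ℂ)
    (rel : ∀ N, ∑ k ∈ range (N+1), (N.choose k : ℂ) * c k - w * c N = (1 - w) * x ^ N)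
    (m n : ℕ) :
    ∑ i ∈ range (m+1), ∑ j ∈ range (n+1), (m.choose i : ℂ) * (n.choose j : ℂ) * c (i+j)
      - w * c (m+n) = (1 - w) * x ^ (m+n) := by
  have h := rel (m+n)
  have key : ∑ k ∈ range (m+n+1), ((m+n).choose k : ℂ) * c k
      = ∑ i ∈ range (m+1), ∑ j ∈ range (n+1), (m.choose i : ℂ) * (n.choose j : ℂ) * c (i+j) := by
    rw [← tri_rect m n (fun i j => (m.choose i : ℂ) * (n.choose j : ℂ) * c (i+j))
      (by intro i j hij
          rcases hij with h' | h'
          · simp [Nat.choose_eq_zero_of_lt h']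
          · simp [Nat.choose_eq_zero_of_lt h'])]
    refine Finset.sum_congr rfl fun k _ => ?_
    rw [Nat.add_choose_eq]
    push_cast
    rw [Finset.sum_mul]
    refine Finset.sum_congr rfl fun p hp => ?_
    rw [Finset.HasAntidiagonal.mem_antidiagonal] at hp
    rw [hp]
  rw [key] at h
  exact h



private lemma G0_mul (d : ℕ → ℂ) (w x : ℂ)
    (rel2 : ∀ m n : ℕ, ∑ i ∈ range (m+1), ∑ j ∈ range (n+1),
        (m.choose i : ℂ) * (n.choose j : ℂ) * d (i+j) - w * d (m+n) = (1 - w) * x ^ (m+n)) :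
    (PowerSeries.mk fun b => PowerSeries.mk fun a =>
        d (a+b) * (a.factorial : ℂ)⁻¹ * (b.factorial : ℂ)⁻¹ : PowerSeries (PowerSeries ℂ))
      * (C (R := PowerSeries ℂ) (exp ℂ) * map (C (R := ℂ)) (exp ℂ) - C (R := PowerSeries ℂ) (C (R := ℂ) w))
    = C (R := PowerSeries ℂ) (C (R := ℂ) (1-w))
      * (C (R := PowerSeries ℂ) (rescale x (exp ℂ)) * map (C (R := ℂ)) (rescale x (exp ℂ))) := by
  set G0 : PowerSeries (PowerSeries ℂ) := PowerSeries.mk fun b => PowerSeries.mk fun a =>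
        d (a+b) * (a.factorial : ℂ)⁻¹ * (b.factorial : ℂ)⁻¹ with hG0
  apply PowerSeries.ext; intro n
  apply PowerSeries.ext; intro m
  rw [mul_sub, map_sub, map_sub]
  have hL2 : coeff (R := ℂ) m (coeff (R := PowerSeries ℂ) n (G0 * C (R := PowerSeries ℂ) (C (R := ℂ) w)))
      = d (m+n) * (m.factorial : ℂ)⁻¹ * (n.factorial : ℂ)⁻¹ * w := by
    rw [PowerSeries.coeff_mul_C, hG0, coeff_mk, PowerSeries.coeff_mul_C, coeff_mk]
  have hL1 : coeff (R := ℂ) m (coeff (R := PowerSeries ℂ) n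
        (G0 * (C (R := PowerSeries ℂ) (exp ℂ) * map (C (R := ℂ)) (exp ℂ))))
      = ∑ p ∈ antidiagonal n, (∑ q ∈ antidiagonal m,
          d (q.1+p.1) * (q.1.factorial : ℂ)⁻¹ * (p.1.factorial : ℂ)⁻¹ * (q.2.factorial : ℂ)⁻¹)
            * (p.2.factorial : ℂ)⁻¹ := by
    rw [PowerSeries.coeff_mul, map_sum]
    refine Finset.sum_congr rfl fun p _ => ?_
    rw [PowerSeries.coeff_C_mul, PowerSeries.coeff_map, coeff_exp_c, hG0, coeff_mk,
      ← mul_assoc, PowerSeries.coeff_mul_C, PowerSeries.coeff_mul]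
    congr 1
    refine Finset.sum_congr rfl fun q _ => ?_
    rw [coeff_mk, coeff_exp_c]
  have hR : coeff (R := ℂ) m (coeff (R := PowerSeries ℂ) n (C (R := PowerSeries ℂ) (C (R := ℂ) (1-w))
        * (C (R := PowerSeries ℂ) (rescale x (exp ℂ)) * map (C (R := ℂ)) (rescale x (exp ℂ)))))
      = (1-w) * (x^m * (m.factorial : ℂ)⁻¹) * (x^n * (n.factorial : ℂ)⁻¹) := by
    rw [PowerSeries.coeff_C_mul, PowerSeries.coeff_C_mul, PowerSeries.coeff_C_mul,
      PowerSeries.coeff_map, PowerSeries.coeff_mul_C, PowerSeries.coeff_rescale,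
      PowerSeries.coeff_rescale, coeff_exp_c, coeff_exp_c]
    ring
  rw [hL1, hL2, hR]
  have key : ∑ p ∈ antidiagonal n, (∑ q ∈ antidiagonal m,
          d (q.1+p.1) * (q.1.factorial : ℂ)⁻¹ * (p.1.factorial : ℂ)⁻¹ * (q.2.factorial : ℂ)⁻¹)
            * (p.2.factorial : ℂ)⁻¹
      = (m.factorial : ℂ)⁻¹ * (n.factorial : ℂ)⁻¹ *
          ∑ i ∈ range (m+1), ∑ j ∈ range (n+1), (m.choose i : ℂ) * (n.choose j : ℂ) * d (i+j) := by
    simp only [Finset.sum_mul]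
    simp only [Finset.Nat.sum_antidiagonal_eq_sum_range_succ_mk]
    conv_rhs => rw [Finset.sum_comm]
    simp only [Finset.mul_sum]
    refine Finset.sum_congr rfl fun b hb => Finset.sum_congr rfl fun a ha => ?_
    have ha' : a ≤ m := Nat.lt_succ_iff.mp (Finset.mem_range.mp ha)
    have hb' : b ≤ n := Nat.lt_succ_iff.mp (Finset.mem_range.mp hb)
    rw [Nat.cast_choose ℂ ha', Nat.cast_choose ℂ hb']
    have h1 := factC_ne m; have h2 := factC_ne n; have h3 := factC_ne a
    have h4 := factC_ne b; have h5 := factC_ne (m-a); have h6 := factC_ne (n-b)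
    field_simp
    try left
    try trivial
    try ring
  rw [key]
  linear_combination ((m.factorial : ℂ)⁻¹ * (n.factorial : ℂ)⁻¹) * rel2 m n

private lemma cc_map (f : ℂ →+* PowerSeries ℂ) (φ : PowerSeries ℂ) :
    constantCoeff (R := PowerSeries ℂ) (map f φ) = f (constantCoeff (R := ℂ) φ) := by
  rw [← coeff_zero_eq_constantCoeff, PowerSeries.coeff_map, coeff_zero_eq_constantCoeff]

private lemma ps_ne_zero {A : Type*} [CommRing A] (f : PowerSeries A)
    (h : PowerSeries.constantCoeff (R := A) f ≠ 0) : f ≠ 0 := fun hf => h (by rw [hf, map_zero])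

theorem carlitz_product_frobenius_euler (H : ℂ → ℕ → ℂ → ℂ)
    (hH : ∀ w : ℂ, w ≠ 1 → ∀ x : ℂ,
      (PowerSeries.mk fun n => H w n x * (n.factorial : ℂ)⁻¹)
          * (PowerSeries.exp ℂ - PowerSeries.C (R := ℂ) w)
        = (1 - w) • PowerSeries.rescale x (PowerSeries.exp ℂ))
    (u v : ℂ) (hu : u ≠ 1) (hv : v ≠ 1) (huv : u * v ≠ 1) (m n : ℕ) :
    ∀ x : ℂ,
      H u m x * H v n x
        = H (u * v) (m + n) x
          + (u * (1 - v) / (1 - u * v))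
              * ∑ r ∈ Finset.Icc 1 m, (m.choose r : ℂ) * H u r 0 * H (u * v) (m + n - r) x
          + (v * (1 - u) / (1 - u * v))
              * ∑ s ∈ Finset.Icc 1 n, (n.choose s : ℂ) * H v s 0 * H (u * v) (m + n - s) x := by
  intro x
  have h1u : (1:ℂ) - u ≠ 0 := sub_ne_zero.mpr (Ne.symm hu)
  have h1v : (1:ℂ) - v ≠ 0 := sub_ne_zero.mpr (Ne.symm hv)
  have h1uv : (1:ℂ) - u*v ≠ 0 := sub_ne_zero.mpr (Ne.symm huv)
  set α : ℂ := u * (1 - v) / (1 - u * v) with hαdef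
  set β : ℂ := v * (1 - u) / (1 - u * v) with hβdef
  set f1 : PowerSeries ℂ := PowerSeries.mk fun k => H u k x * (k.factorial : ℂ)⁻¹ with hf1
  set f2 : PowerSeries ℂ := PowerSeries.mk fun k => H v k x * (k.factorial : ℂ)⁻¹ with hf2
  set f10 : PowerSeries ℂ := PowerSeries.mk fun k => H u k 0 * (k.factorial : ℂ)⁻¹ with hf10
  set f20 : PowerSeries ℂ := PowerSeries.mk fun k => H v k 0 * (k.factorial : ℂ)⁻¹ with hf20
  set G0 : PowerSeries (PowerSeries ℂ) := PowerSeries.mk fun b => PowerSeries.mk fun a =>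
      H (u*v) (a+b) x * (a.factorial : ℂ)⁻¹ * (b.factorial : ℂ)⁻¹ with hG0'
  -- the five power series relations in ℂ[[t]][[s]]
  have h1 : C (R := PowerSeries ℂ) f1 * (C (R := PowerSeries ℂ) (exp ℂ) - C (R := PowerSeries ℂ) (C (R := ℂ) u))
      = (1 - C (R := PowerSeries ℂ) (C (R := ℂ) u)) * C (R := PowerSeries ℂ) (rescale x (exp ℂ)) := by
    have h := hH u hu x
    rw [smul_eq_C_mul] at h
    have h' := congrArg (C (R := PowerSeries ℂ)) h
    rw [map_mul, map_sub, map_mul] at h'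
    rw [← hf1] at h'
    rw [h']
    simp only [map_sub, map_one]
  have h2 : map (C (R := ℂ)) f2 * (map (C (R := ℂ)) (exp ℂ) - C (R := PowerSeries ℂ) (C (R := ℂ) v))
      = (1 - C (R := PowerSeries ℂ) (C (R := ℂ) v)) * map (C (R := ℂ)) (rescale x (exp ℂ)) := by
    have h := hH v hv x
    rw [smul_eq_C_mul] at h
    have h' := congrArg (map (C (R := ℂ))) h
    simp only [map_mul, map_sub, PowerSeries.map_C] at h'
    rw [← hf2] at h'
    rw [h']
    simp only [map_sub, map_one]
  have h40 : f10 * (exp ℂ - C (R := ℂ) u) = C (R := ℂ) (1 - u) := by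
    have h := hH u hu 0
    rw [rescale_zero] at h
    simp only [RingHom.comp_apply, constantCoeff_exp, map_one, smul_eq_C_mul, mul_one] at h
    rw [← hf10] at h
    exact h
  have h4 : C (R := PowerSeries ℂ) f10 * (C (R := PowerSeries ℂ) (exp ℂ) - C (R := PowerSeries ℂ) (C (R := ℂ) u))
      = 1 - C (R := PowerSeries ℂ) (C (R := ℂ) u) := by
    have h' := congrArg (C (R := PowerSeries ℂ)) h40
    rw [map_mul, map_sub] at h'
    rw [h']
    simp only [map_sub, map_one]
  have h50 : f20 * (exp ℂ - C (R := ℂ) v) = C (R := ℂ) (1 - v) := by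
    have h := hH v hv 0
    rw [rescale_zero] at h
    simp only [RingHom.comp_apply, constantCoeff_exp, map_one, smul_eq_C_mul, mul_one] at h
    rw [← hf20] at h
    exact h
  have h5 : map (C (R := ℂ)) f20 * (map (C (R := ℂ)) (exp ℂ) - C (R := PowerSeries ℂ) (C (R := ℂ) v))
      = 1 - C (R := PowerSeries ℂ) (C (R := ℂ) v) := by
    have h' := congrArg (map (C (R := ℂ))) h50
    simp only [map_mul, map_sub, PowerSeries.map_C] at h'
    rw [h']
    simp only [map_sub, map_one]
  -- the relation for the sequence H (u*v) · x
  have relw := rel_of (fun N => H (u*v) N x) (u*v) x (hH (u*v) huv x)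
  have rel2w := rel2_of (fun N => H (u*v) N x) (u*v) x relw
  have h3 : G0 * (C (R := PowerSeries ℂ) (exp ℂ) * map (C (R := ℂ)) (exp ℂ)
        - C (R := PowerSeries ℂ) (C (R := ℂ) u) * C (R := PowerSeries ℂ) (C (R := ℂ) v))
      = (1 - C (R := PowerSeries ℂ) (C (R := ℂ) u) * C (R := PowerSeries ℂ) (C (R := ℂ) v))
        * (C (R := PowerSeries ℂ) (rescale x (exp ℂ)) * map (C (R := ℂ)) (rescale x (exp ℂ))) := by
    have h := G0_mul (fun N => H (u*v) N x) (u*v) x rel2w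
    rw [← hG0'] at h
    rw [show (C (R := ℂ)) (u*v) = C (R := ℂ) u * C (R := ℂ) v from map_mul _ u v] at h
    rw [show (C (R := PowerSeries ℂ)) (C (R := ℂ) u * C (R := ℂ) v)
        = C (R := PowerSeries ℂ) (C (R := ℂ) u) * C (R := PowerSeries ℂ) (C (R := ℂ) v) from map_mul _ _ _] at h
    rw [h]
    simp only [map_sub, map_one, map_mul]
  -- scalar identities
  have hsc : ∀ z : ℂ, C (R := PowerSeries ℂ) (C (R := ℂ) z)
      = ((C (R := PowerSeries ℂ)).comp (C (R := ℂ))) z := fun z => rfl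
  have hα : C (R := PowerSeries ℂ) (C (R := ℂ) α)
        * (1 - C (R := PowerSeries ℂ) (C (R := ℂ) u) * C (R := PowerSeries ℂ) (C (R := ℂ) v))
      = C (R := PowerSeries ℂ) (C (R := ℂ) u) * (1 - C (R := PowerSeries ℂ) (C (R := ℂ) v)) := by
    have hc : α * (1 - u*v) = u * (1 - v) := div_mul_cancel₀ _ h1uv
    have h' := congrArg ((C (R := PowerSeries ℂ)).comp (C (R := ℂ))) hc
    simp only [map_mul, map_sub, map_one] at h'
    simp only [hsc]
    exact h'
  have hβ : C (R := PowerSeries ℂ) (C (R := ℂ) β)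
        * (1 - C (R := PowerSeries ℂ) (C (R := ℂ) u) * C (R := PowerSeries ℂ) (C (R := ℂ) v))
      = C (R := PowerSeries ℂ) (C (R := ℂ) v) * (1 - C (R := PowerSeries ℂ) (C (R := ℂ) u)) := by
    have hc : β * (1 - u*v) = v * (1 - u) := div_mul_cancel₀ _ h1uv
    have h' := congrArg ((C (R := PowerSeries ℂ)).comp (C (R := ℂ))) hc
    simp only [map_mul, map_sub, map_one] at h'
    simp only [hsc]
    exact h'
  -- nonvanishing of the multiplier
  have hM1 : C (R := PowerSeries ℂ) (exp ℂ) - C (R := PowerSeries ℂ) (C (R := ℂ) u) ≠ 0 := by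
    apply ps_ne_zero
    rw [map_sub, constantCoeff_C, constantCoeff_C]
    apply ps_ne_zero
    rw [map_sub, constantCoeff_exp, constantCoeff_C]
    exact h1u
  have hM2 : map (C (R := ℂ)) (exp ℂ) - C (R := PowerSeries ℂ) (C (R := ℂ) v) ≠ 0 := by
    apply ps_ne_zero
    rw [map_sub, cc_map, constantCoeff_exp, constantCoeff_C, map_one]
    apply ps_ne_zero
    rw [map_sub, constantCoeff_one, constantCoeff_C]
    exact h1v
  have hM3 : C (R := PowerSeries ℂ) (exp ℂ) * map (C (R := ℂ)) (exp ℂ)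
      - C (R := PowerSeries ℂ) (C (R := ℂ) u) * C (R := PowerSeries ℂ) (C (R := ℂ) v) ≠ 0 := by
    apply ps_ne_zero
    rw [map_sub, map_mul, map_mul, cc_map, constantCoeff_exp, constantCoeff_C,
      constantCoeff_C, constantCoeff_C, map_one, mul_one]
    apply ps_ne_zero
    rw [map_sub, map_mul, constantCoeff_exp, constantCoeff_C, constantCoeff_C]
    exact h1uv
  -- the master identity
  have star : C (R := PowerSeries ℂ) f1 * map (C (R := ℂ)) f2
      = G0 + C (R := PowerSeries ℂ) (C (R := ℂ) α) * ((C (R := PowerSeries ℂ) f10 - 1) * G0)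
          + C (R := PowerSeries ℂ) (C (R := ℂ) β) * ((map (C (R := ℂ)) f20 - 1) * G0) := by
    apply mul_right_cancel₀ (mul_ne_zero (mul_ne_zero hM1 hM2) hM3)
    set A := C (R := PowerSeries ℂ) (exp ℂ)
    set B := map (C (R := ℂ)) (exp ℂ)
    set P := C (R := PowerSeries ℂ) (rescale x (exp ℂ))
    set Q := map (C (R := ℂ)) (rescale x (exp ℂ))
    set cu := C (R := PowerSeries ℂ) (C (R := ℂ) u)
    set cv := C (R := PowerSeries ℂ) (C (R := ℂ) v)
    set cα := C (R := PowerSeries ℂ) (C (R := ℂ) α)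
    set cβ := C (R := PowerSeries ℂ) (C (R := ℂ) β)
    linear_combination (map (C (R := ℂ)) f2 * (B - cv) * (A*B - cu*cv)) * h1
      + ((1 - cu) * P * (A*B - cu*cv)) * h2
      - ((A - cu)*(B - cv) + cα*(1 - A)*(B - cv) + cβ*(1 - B)*(A - cu)) * h3
      - (cα * G0 * (A*B - cu*cv) * (B - cv)) * h4
      - (cβ * G0 * (A*B - cu*cv) * (A - cu)) * h5
      - ((1 - A)*(B - cv)*(P*Q)) * hα
      - ((1 - B)*(A - cu)*(P*Q)) * hβ
  -- H w 0 0 = 1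
  have hu0 : H u 0 0 = 1 := by
    have r0 := rel_of (fun N => H u N 0) u 0 (hH u hu 0) 0
    simp at r0
    have : (1 - u) * H u 0 0 = (1 - u) * 1 := by linear_combination r0
    exact mul_left_cancel₀ h1u this
  have hv0 : H v 0 0 = 1 := by
    have r0 := rel_of (fun N => H v N 0) v 0 (hH v hv 0) 0
    simp at r0
    have : (1 - v) * H v 0 0 = (1 - v) * 1 := by linear_combination r0
    exact mul_left_cancel₀ h1v this
  -- coefficient extraction
  have e0 : (coeff (R := ℂ) m) ((coeff (R := PowerSeries ℂ) n) (C (R := PowerSeries ℂ) f1 * map (C (R := ℂ)) f2))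
      = (H u m x * (m.factorial : ℂ)⁻¹) * (H v n x * (n.factorial : ℂ)⁻¹) := by
    rw [PowerSeries.coeff_C_mul, PowerSeries.coeff_map, PowerSeries.coeff_mul_C,
      hf1, coeff_mk, hf2, coeff_mk]
  have e1 : (coeff (R := ℂ) m) ((coeff (R := PowerSeries ℂ) n) G0)
      = H (u*v) (m+n) x * (m.factorial : ℂ)⁻¹ * (n.factorial : ℂ)⁻¹ := by
    rw [hG0', coeff_mk, coeff_mk]
  have e2 : (coeff (R := ℂ) m) ((coeff (R := PowerSeries ℂ) n) ((C (R := PowerSeries ℂ) f10 - 1) * G0))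
      = ∑ q ∈ antidiagonal m,
          (H u q.1 0 * (q.1.factorial : ℂ)⁻¹ - if q.1 = 0 then 1 else 0)
            * (H (u*v) (q.2+n) x * (q.2.factorial : ℂ)⁻¹ * (n.factorial : ℂ)⁻¹) := by
    rw [show C (R := PowerSeries ℂ) f10 - 1 = C (R := PowerSeries ℂ) (f10 - 1) by rw [map_sub, map_one]]
    rw [PowerSeries.coeff_C_mul, hG0', coeff_mk, PowerSeries.coeff_mul]
    refine Finset.sum_congr rfl fun q _ => ?_
    rw [map_sub, hf10, coeff_mk, PowerSeries.coeff_one, coeff_mk]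
  have e3 : (coeff (R := ℂ) m) ((coeff (R := PowerSeries ℂ) n) ((map (C (R := ℂ)) f20 - 1) * G0))
      = ∑ p ∈ antidiagonal n,
          (H v p.1 0 * (p.1.factorial : ℂ)⁻¹ - if p.1 = 0 then 1 else 0)
            * (H (u*v) (m+p.2) x * (m.factorial : ℂ)⁻¹ * (p.2.factorial : ℂ)⁻¹) := by
    rw [show map (C (R := ℂ)) f20 - 1 = map (C (R := ℂ)) (f20 - 1) by rw [map_sub, map_one]]
    rw [PowerSeries.coeff_mul, map_sum]
    refine Finset.sum_congr rfl fun p _ => ?_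
    rw [PowerSeries.coeff_map, hG0', coeff_mk, PowerSeries.coeff_C_mul, coeff_mk,
      map_sub, hf20, coeff_mk, PowerSeries.coeff_one]
  have hins : ∀ M : ℕ, range (M+1) = insert 0 (Finset.Icc 1 M) := by
    intro M; ext r
    simp only [Finset.mem_range, Finset.mem_insert, Finset.mem_Icc]
    omega
  have S1 : ∑ q ∈ antidiagonal m,
          (H u q.1 0 * (q.1.factorial : ℂ)⁻¹ - if q.1 = 0 then 1 else 0)
            * (H (u*v) (q.2+n) x * (q.2.factorial : ℂ)⁻¹ * (n.factorial : ℂ)⁻¹)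
      = (m.factorial : ℂ)⁻¹ * (n.factorial : ℂ)⁻¹
          * ∑ r ∈ Finset.Icc 1 m, (m.choose r : ℂ) * H u r 0 * H (u * v) (m + n - r) x := by
    rw [Finset.Nat.sum_antidiagonal_eq_sum_range_succ_mk, hins m,
      Finset.sum_insert (by simp), Finset.mul_sum]
    rw [show (H u 0 0 * ((Nat.factorial 0 : ℕ) : ℂ)⁻¹ - if (0:ℕ) = 0 then 1 else 0)
          * (H (u*v) (m - 0 + n) x * (((m-0).factorial : ℕ) : ℂ)⁻¹ * (n.factorial : ℂ)⁻¹)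
        = 0 by simp [hu0]]
    rw [zero_add]
    refine Finset.sum_congr rfl fun r hr => ?_
    rw [Finset.mem_Icc] at hr
    rw [if_neg (by omega : ¬ r = 0), sub_zero,
      show m - r + n = m + n - r from by omega, Nat.cast_choose ℂ hr.2]
    have h1 := factC_ne m; have h2 := factC_ne n; have h3 := factC_ne r
    have h4 := factC_ne (m-r)
    field_simp
  have S2 : ∑ p ∈ antidiagonal n,
          (H v p.1 0 * (p.1.factorial : ℂ)⁻¹ - if p.1 = 0 then 1 else 0)
            * (H (u*v) (m+p.2) x * (m.factorial : ℂ)⁻¹ * (p.2.factorial : ℂ)⁻¹)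
      = (m.factorial : ℂ)⁻¹ * (n.factorial : ℂ)⁻¹
          * ∑ s ∈ Finset.Icc 1 n, (n.choose s : ℂ) * H v s 0 * H (u * v) (m + n - s) x := by
    rw [Finset.Nat.sum_antidiagonal_eq_sum_range_succ_mk, hins n,
      Finset.sum_insert (by simp), Finset.mul_sum]
    rw [show (H v 0 0 * ((Nat.factorial 0 : ℕ) : ℂ)⁻¹ - if (0:ℕ) = 0 then 1 else 0)
          * (H (u*v) (m + (n - 0)) x * (m.factorial : ℂ)⁻¹ * (((n-0).factorial : ℕ) : ℂ)⁻¹)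
        = 0 by simp [hv0]]
    rw [zero_add]
    refine Finset.sum_congr rfl fun s hs => ?_
    rw [Finset.mem_Icc] at hs
    rw [if_neg (by omega : ¬ s = 0), sub_zero,
      show m + (n - s) = m + n - s from by omega, Nat.cast_choose ℂ hs.2]
    have h1 := factC_ne m; have h2 := factC_ne n; have h3 := factC_ne s
    have h4 := factC_ne (n-s)
    field_simp
  have eA : (coeff (R := ℂ) m) ((coeff (R := PowerSeries ℂ) n)
        (C (R := PowerSeries ℂ) (C (R := ℂ) α) * ((C (R := PowerSeries ℂ) f10 - 1) * G0)))
      = α * (coeff (R := ℂ) m) ((coeff (R := PowerSeries ℂ) n) ((C (R := PowerSeries ℂ) f10 - 1) * G0)) := by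
    rw [PowerSeries.coeff_C_mul, PowerSeries.coeff_C_mul]
  have eB : (coeff (R := ℂ) m) ((coeff (R := PowerSeries ℂ) n)
        (C (R := PowerSeries ℂ) (C (R := ℂ) β) * ((map (C (R := ℂ)) f20 - 1) * G0)))
      = β * (coeff (R := ℂ) m) ((coeff (R := PowerSeries ℂ) n) ((map (C (R := ℂ)) f20 - 1) * G0)) := by
    rw [PowerSeries.coeff_C_mul, PowerSeries.coeff_C_mul]
  have ext := congrArg (fun F => (coeff (R := ℂ) m) ((coeff (R := PowerSeries ℂ) n) F)) star
  beta_reduce at ext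
  rw [map_add, map_add, map_add, map_add, eA, eB, e0, e1, e2, e3, S1, S2] at ext
  have hne : ((m.factorial : ℂ))⁻¹ * ((n.factorial : ℂ))⁻¹ ≠ 0 :=
    mul_ne_zero (inv_ne_zero (factC_ne m)) (inv_ne_zero (factC_ne n))
  apply mul_left_cancel₀ hne
  linear_combination ext
end

section
/- For u ≠ 1 and nonnegative integers m, n: B_m(x) H_n(x|u) = m·H_{m+n−1}(x|u) + ∑_{r=0}^{m} C(m,r) B_r H_{m+n−r}(x|u) + (mu/(1−u)) ∑_{s=0}^{n} C(n,s) H_s(u) H_{m+n−s−1}(x|u), where B_r are the Bernoulli numbers and B_m(x) the Bernoulli polynomials. -/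
open Finset PowerSeries Polynomial

private lemma FE_E_ne (u : ℂ) : PowerSeries.exp ℂ - PowerSeries.C u ≠ 0 := by
  intro h
  have h1 := congrArg (PowerSeries.coeff 1) h
  simp [PowerSeries.coeff_exp, PowerSeries.coeff_C] at h1

private lemma FE_mk_add (u : ℂ) (H : ℕ → ℂ → ℂ)
    (hH : ∀ x : ℂ,
      (PowerSeries.mk fun n => H n x * (n.factorial : ℂ)⁻¹)
          * (PowerSeries.exp ℂ - PowerSeries.C u)
        = (1 - u) • PowerSeries.rescale x (PowerSeries.exp ℂ)) (x y : ℂ) :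
    (PowerSeries.mk fun n => H n (x + y) * (n.factorial : ℂ)⁻¹)
      = PowerSeries.rescale y (PowerSeries.exp ℂ)
          * PowerSeries.mk fun n => H n x * (n.factorial : ℂ)⁻¹ := by
  apply mul_right_cancel₀ (FE_E_ne u)
  rw [hH (x + y), ← PowerSeries.exp_mul_exp_eq_exp_add x y, mul_assoc, hH x,
    PowerSeries.smul_eq_C_mul, PowerSeries.smul_eq_C_mul]
  ring
private lemma algQ (k : ℕ) : (algebraMap ℚ ℂ) (1 / (k.factorial : ℚ)) = ((k.factorial : ℂ))⁻¹ := by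
  rw [one_div, map_inv₀, map_natCast]

private lemma FE_shift (u : ℂ) (H : ℕ → ℂ → ℂ)
    (hH : ∀ x : ℂ,
      (PowerSeries.mk fun n => H n x * (n.factorial : ℂ)⁻¹)
          * (PowerSeries.exp ℂ - PowerSeries.C u)
        = (1 - u) • PowerSeries.rescale x (PowerSeries.exp ℂ)) (k : ℕ) (x : ℂ) :
    H k (x + 1) = u * H k x + (1 - u) * x ^ k := by
  have h1 : (PowerSeries.mk fun n => H n (x + 1) * (n.factorial : ℂ)⁻¹)
      - u • (PowerSeries.mk fun n => H n x * (n.factorial : ℂ)⁻¹)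
      = (1 - u) • PowerSeries.rescale x (PowerSeries.exp ℂ) := by
    rw [FE_mk_add u H hH x 1, PowerSeries.rescale_one, PowerSeries.smul_eq_C_mul, ← hH x]
    simp only [RingHom.id_apply]
    ring
  have h2 := congrArg (PowerSeries.coeff k) h1
  simp only [map_sub, PowerSeries.coeff_mk, PowerSeries.coeff_smul, smul_eq_mul,
    PowerSeries.coeff_rescale, PowerSeries.coeff_exp, algQ] at h2
  have hk : (k.factorial : ℂ) ≠ 0 := Nat.cast_ne_zero.mpr k.factorial_ne_zero
  field_simp at h2
  linear_combination h2

private lemma FE_expand (u : ℂ) (H : ℕ → ℂ → ℂ)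
    (hH : ∀ x : ℂ,
      (PowerSeries.mk fun n => H n x * (n.factorial : ℂ)⁻¹)
          * (PowerSeries.exp ℂ - PowerSeries.C u)
        = (1 - u) • PowerSeries.rescale x (PowerSeries.exp ℂ)) (k : ℕ) (x : ℂ) :
    H k x = ∑ j ∈ Finset.range (k + 1), (k.choose j : ℂ) * H j 0 * x ^ (k - j) := by
  have h0 : (PowerSeries.mk fun n => H n x * (n.factorial : ℂ)⁻¹)
      = (PowerSeries.mk fun n => H n 0 * (n.factorial : ℂ)⁻¹)
          * PowerSeries.rescale x (PowerSeries.exp ℂ) := by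
    have h := FE_mk_add u H hH 0 x
    rw [zero_add] at h
    rw [h, mul_comm]
  have h2 := congrArg (PowerSeries.coeff k) h0
  rw [PowerSeries.coeff_mk, PowerSeries.coeff_mul,
    Finset.Nat.sum_antidiagonal_eq_sum_range_succ_mk] at h2
  have hk : (k.factorial : ℂ) ≠ 0 := Nat.cast_ne_zero.mpr k.factorial_ne_zero
  have h3 : H k x = (k.factorial : ℂ) * (H k x * ((k.factorial : ℂ))⁻¹) := by field_simp
  rw [h3, h2, Finset.mul_sum]
  refine Finset.sum_congr rfl fun i hi => ?_
  have hik : i ≤ k := Nat.lt_succ_iff.mp (Finset.mem_range.mp hi)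
  simp only [PowerSeries.coeff_mk, PowerSeries.coeff_rescale, PowerSeries.coeff_exp, algQ]
  have hc : ((k.choose i : ℕ) : ℂ) * (i.factorial : ℂ) * ((k - i).factorial : ℂ)
      = (k.factorial : ℂ) := by
    exact_mod_cast congrArg (Nat.cast : ℕ → ℂ) (Nat.choose_mul_factorial_mul_factorial hik)
  have hi' : (i.factorial : ℂ) ≠ 0 := Nat.cast_ne_zero.mpr i.factorial_ne_zero
  have hki : ((k - i).factorial : ℂ) ≠ 0 := Nat.cast_ne_zero.mpr (k - i).factorial_ne_zero
  field_simp
  linear_combination (-(H i 0 * x ^ (k - i))) * hc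
private lemma bern_shift (m : ℕ) (x : ℂ) :
    ((Polynomial.bernoulli m).map (algebraMap ℚ ℂ)).eval (x + 1)
      = ((Polynomial.bernoulli m).map (algebraMap ℚ ℂ)).eval x + (m : ℂ) * x ^ (m - 1) := by
  have hq : (Polynomial.bernoulli m).comp (Polynomial.X + Polynomial.C 1)
      = Polynomial.bernoulli m + Polynomial.C (m : ℚ) * Polynomial.X ^ (m - 1) := by
    apply Polynomial.funext
    intro r
    simp [Polynomial.eval_comp, Polynomial.bernoulli_eval_one_add, add_comm r 1]
  have h := congrArg (fun p : Polynomial ℚ =>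
    Polynomial.eval x (p.map (algebraMap ℚ ℂ))) hq
  simp only [Polynomial.map_comp, Polynomial.map_add, Polynomial.map_X, Polynomial.map_one,
    Polynomial.map_C, Polynomial.map_mul, Polynomial.map_pow, Polynomial.eval_comp,
    Polynomial.eval_add, Polynomial.eval_X, Polynomial.eval_C, Polynomial.eval_mul,
    Polynomial.eval_pow, map_natCast, map_one, Polynomial.eval_natCast] at h
  simpa using h

private lemma bern_expand (m : ℕ) (x : ℂ) :
    ((Polynomial.bernoulli m).map (algebraMap ℚ ℂ)).eval x
      = ∑ r ∈ Finset.range (m + 1), (m.choose r : ℂ) * (bernoulli r : ℂ) * x ^ (m - r) := by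
  rw [Polynomial.bernoulli, Polynomial.map_sum]
  rw [Polynomial.eval_finset_sum]
  refine Finset.sum_congr rfl fun r hr => ?_
  rw [Polynomial.map_monomial, Polynomial.eval_monomial]
  rw [map_mul, map_natCast, eq_ratCast]
  ring

private lemma shift_eq_zero (u : ℂ) (hu : u ≠ 1) (p : Polynomial ℂ)
    (h : ∀ x : ℂ, p.eval (x + 1) = u * p.eval x) : p = 0 := by
  by_contra hp
  have hcomp : p.comp (Polynomial.X + Polynomial.C 1) = Polynomial.C u * p := by
    apply Polynomial.funext
    intro r
    simp [Polynomial.eval_comp, h r]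
  have h1 : (p.comp (Polynomial.X + Polynomial.C 1)).leadingCoeff = p.leadingCoeff := by
    rw [Polynomial.leadingCoeff_comp
      (by rw [Polynomial.natDegree_X_add_C]; norm_num)]
    rw [Polynomial.leadingCoeff_X_add_C, one_pow, mul_one]
  rw [hcomp, Polynomial.leadingCoeff_mul, Polynomial.leadingCoeff_C] at h1
  have hlc : p.leadingCoeff ≠ 0 := Polynomial.leadingCoeff_ne_zero.mpr hp
  apply hu
  have : u * p.leadingCoeff = 1 * p.leadingCoeff := by rw [one_mul]; exact h1
  exact mul_right_cancel₀ hlc this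
theorem nielsen_bernoulli_frobenius_euler (u : ℂ) (hu : u ≠ 1) (H : ℕ → ℂ → ℂ)
    (hH : ∀ x : ℂ,
      (PowerSeries.mk fun n => H n x * (n.factorial : ℂ)⁻¹)
          * (PowerSeries.exp ℂ - PowerSeries.C u)
        = (1 - u) • PowerSeries.rescale x (PowerSeries.exp ℂ))
    (m n : ℕ) :
    ∀ x : ℂ,
      ((Polynomial.bernoulli m).map (algebraMap ℚ ℂ)).eval x * H n x
        = (m : ℂ) * H (m + n - 1) x
          + ∑ r ∈ Finset.range (m + 1), (m.choose r : ℂ) * (bernoulli r : ℂ) * H (m + n - r) x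
          + ((m : ℂ) * u / (1 - u))
              * ∑ s ∈ Finset.range (n + 1), (n.choose s : ℂ) * H s 0 * H (m + n - s - 1) x := by
  have hu1 : (1 : ℂ) - u ≠ 0 := sub_ne_zero.mpr (Ne.symm hu)
  rcases Nat.eq_zero_or_pos m with hm | hm
  · subst hm
    intro x
    simp [Polynomial.bernoulli_zero]
  obtain ⟨M, rfl⟩ : ∃ M, m = M + 1 := ⟨m - 1, by omega⟩
  set m : ℕ := M + 1 with hmdef
  -- the polynomial whose evaluation is LHS - RHS
  set Q : ℕ → Polynomial ℂ := fun k =>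
    ∑ j ∈ Finset.range (k + 1), Polynomial.C ((k.choose j : ℂ) * H j 0) * Polynomial.X ^ (k - j)
    with hQdef
  have hQ : ∀ (k : ℕ) (x : ℂ), (Q k).eval x = H k x := by
    intro k x
    rw [FE_expand u H hH k x, hQdef]
    simp [Polynomial.eval_finset_sum]
  set c : ℂ := (m : ℂ) * u / (1 - u) with hcdef
  set P : Polynomial ℂ :=
    ((Polynomial.bernoulli m).map (algebraMap ℚ ℂ)) * Q n
      - (Polynomial.C (m : ℂ) * Q (m + n - 1)
        + ∑ r ∈ Finset.range (m + 1),
            Polynomial.C ((m.choose r : ℂ) * (bernoulli r : ℂ)) * Q (m + n - r)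
        + Polynomial.C c
            * ∑ s ∈ Finset.range (n + 1),
                Polynomial.C ((n.choose s : ℂ) * H s 0) * Q (m + n - s - 1)) with hPdef
  have hPeval : ∀ x : ℂ, P.eval x
      = ((Polynomial.bernoulli m).map (algebraMap ℚ ℂ)).eval x * H n x
        - ((m : ℂ) * H (m + n - 1) x
          + ∑ r ∈ Finset.range (m + 1), (m.choose r : ℂ) * (bernoulli r : ℂ) * H (m + n - r) x
          + c * ∑ s ∈ Finset.range (n + 1), (n.choose s : ℂ) * H s 0 * H (m + n - s - 1) x) := by
    intro x
    simp only [hPdef, Polynomial.eval_sub, Polynomial.eval_add, Polynomial.eval_mul,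
      Polynomial.eval_C, Polynomial.eval_finset_sum, hQ]
  have hPshift : ∀ x : ℂ, P.eval (x + 1) = u * P.eval x := by
    intro x
    rw [hPeval, hPeval]
    have hS2 : ∑ r ∈ Finset.range (m + 1),
          (m.choose r : ℂ) * (bernoulli r : ℂ) * H (m + n - r) (x + 1)
        = u * ∑ r ∈ Finset.range (m + 1),
              (m.choose r : ℂ) * (bernoulli r : ℂ) * H (m + n - r) x
          + (1 - u) * (x ^ n * ((Polynomial.bernoulli m).map (algebraMap ℚ ℂ)).eval x) := by
      rw [bern_expand m x]
      simp only [Finset.mul_sum, ← Finset.sum_add_distrib]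
      refine Finset.sum_congr rfl fun r hr => ?_
      have hr' : r ≤ m := Nat.lt_succ_iff.mp (Finset.mem_range.mp hr)
      rw [FE_shift u H hH]
      have hx : x ^ (m + n - r) = x ^ n * x ^ (m - r) := by
        rw [← pow_add]; congr 1; omega
      rw [hx]; ring
    have hS3 : ∑ s ∈ Finset.range (n + 1),
          (n.choose s : ℂ) * H s 0 * H (m + n - s - 1) (x + 1)
        = u * ∑ s ∈ Finset.range (n + 1),
              (n.choose s : ℂ) * H s 0 * H (m + n - s - 1) x
          + (1 - u) * (x ^ (m - 1) * H n x) := by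
      conv_rhs => rw [FE_expand u H hH n x]
      simp only [Finset.mul_sum, ← Finset.sum_add_distrib]
      refine Finset.sum_congr rfl fun s hs => ?_
      have hs' : s ≤ n := Nat.lt_succ_iff.mp (Finset.mem_range.mp hs)
      rw [FE_shift u H hH]
      have hx : x ^ (m + n - s - 1) = x ^ (m - 1) * x ^ (n - s) := by
        rw [← pow_add]; congr 1; omega
      rw [hx]; ring
    rw [hS2, hS3, bern_shift m x, FE_shift u H hH n x, FE_shift u H hH (m + n - 1) x]
    have hx1 : x ^ (m + n - 1) = x ^ (m - 1) * x ^ n := by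
      rw [← pow_add]; congr 1; omega
    rw [hx1, hcdef]
    field_simp
    ring
  have hP0 : P = 0 := shift_eq_zero u hu P hPshift
  intro x
  have h0 := hPeval x
  rw [hP0, Polynomial.eval_zero] at h0
  have := (sub_eq_zero.mp h0.symm)
  rw [this, hcdef]
end
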